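/- arXiv:0710.5338 — 5 statements merged into one kernel-verified Lean document; each statement's English description precedes it below -/
import Mathlib

section
/- Let an instance of the complete and strict 2-weighted popular matching problem with weights satisfying w1 ≥ 2·w2 be given. Then a matching M is a 2-weighted popular matching if and only if M is a well-formed matching. -/
open scoped Classical
open Finset

noncomputable section

/-- An instance of the complete and strict 2-weighted popular matching problem:
applicants `A` partitioned into categories `A1` (weight `w1`) and `A2` (weight `w2`),
items `I` with `|A| < |I|`, and for each applicant a strict complete preference list
encoded by an injective ranking function (smaller rank = more preferred). -/
structure TwoWPM (A I : Type) [Fintype A] [DecidableEq A] [Fintype I] [DecidableEq I] where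
  A1 : Finset A
  A2 : Finset A
  union_eq : A1 ∪ A2 = Finset.univ
  disj : Disjoint A1 A2
  w1 : ℝ
  w2 : ℝ
  hw12 : w2 < w1
  hw2 : 0 < w2
  rank : A → I → ℕ
  rank_inj : ∀ x : A, Function.Injective (rank x)
  card_lt : Fintype.card A < Fintype.card I

namespace TwoWPM

variable {A I : Type} [Fintype A] [DecidableEq A] [Fintype I] [DecidableEq I]
variable (P : TwoWPM A I)

/-- applicant `x` prefers item `p` to item `q`. -/
def Prefers (x : A) (p q : I) : Prop := P.rank x p < P.rank x q

/-- the most preferred item of applicant `x` within the set `s` (junk value if `s = ∅`). -/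
def bestIn (x : A) (s : Finset I) : I :=
  if hs : s.Nonempty then (Finset.exists_min_image s (P.rank x) hs).choose
  else (Fintype.card_pos_iff.mp (Nat.lt_of_le_of_lt (Nat.zero_le _) P.card_lt)).some

/-- the first item of an applicant of the first category. -/
def f1 (x : A) : I := P.bestIn x Finset.univ
/-- the set of `f1`-items. -/
def F1 : Finset I := P.A1.image P.f1
/-- the second item of an applicant of the first category. -/
def s1 (x : A) : I := P.bestIn x (Finset.univ \ P.F1)
/-- the set of `s1`-items. -/
def S1 : Finset I := P.A1.image P.s1
/-- the first item of an applicant of the second category. -/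
def f2 (y : A) : I := P.bestIn y (Finset.univ \ P.F1)
/-- the set of `f2`-items. -/
def F2 : Finset I := P.A2.image P.f2
/-- the second item of an applicant of the second category. -/
def s2 (y : A) : I := P.bestIn y (Finset.univ \ (P.F1 ∪ P.F2))
/-- the set of `s2`-items. -/
def S2 : Finset I := P.A2.image P.s2

/-- the weight of an applicant. -/
def weight (x : A) : ℝ := if x ∈ P.A1 then P.w1 else P.w2

/-- `M` is more popular than `M'`: the total weight of applicants preferring `M`
exceeds the total weight of applicants preferring `M'`. -/
def MorePopular (M M' : A → I) : Prop :=
  (∑ x : A, if P.Prefers x (M' x) (M x) then P.weight x else 0) <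
    ∑ x : A, if P.Prefers x (M x) (M' x) then P.weight x else 0

/-- `M` is a 2-weighted popular matching. -/
def IsPopular (M : A → I) : Prop :=
  Function.Injective M ∧ ∀ M' : A → I, Function.Injective M' → ¬ P.MorePopular M' M

/-- `M` is a well-formed matching. -/
def IsWellFormed (M : A → I) : Prop :=
  Function.Injective M ∧
  (∀ x ∈ P.A1, M x = P.f1 x ∨ M x = P.s1 x) ∧
  (∀ y ∈ P.A2, M y = P.f2 y ∨ M y = P.s2 y) ∧
  (∀ p ∈ P.F1, ∃ x ∈ P.A1, P.f1 x = p ∧ M x = p) ∧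
  (∀ q ∈ P.F2, ∃ y ∈ P.A2, P.f2 y = q ∧ M y = q)

/-- the instance has a 2-weighted popular matching. -/
def HasPopular : Prop := ∃ M : A → I, P.IsPopular M

/-- the instance has a well-formed matching. -/
def HasWellFormed : Prop := ∃ M : A → I, P.IsWellFormed M

/-- the `f`-endpoint of the fs-relation-graph edge associated with applicant `a`. -/
def fEnd (a : A) : I := if a ∈ P.A1 then P.f1 a else P.f2 a
/-- the `s`-endpoint of the fs-relation-graph edge associated with applicant `a`. -/
def sEnd (a : A) : I := if a ∈ P.A1 then P.s1 a else P.s2 a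

/-- the edge of applicant `a` joins items `p` and `q` in the fs-relation graph. -/
def EdgeJoins (a : A) (p q : I) : Prop :=
  (P.fEnd a = p ∧ P.sEnd a = q) ∨ (P.fEnd a = q ∧ P.sEnd a = p)

/-- adjacency in the fs-relation graph. -/
def Adj (p q : I) : Prop := ∃ a : A, P.EdgeJoins a p q

/-- a simple path in the fs-relation graph with `k` (distinct) vertices
`v 0, …, v (k-1)` and edges `e 0, …, e (k-2)`, edge `e i` joining `v i` and `v (i+1)`. -/
def IsPath (k : ℕ) (v : ℕ → I) (e : ℕ → A) : Prop :=
  (∀ i j, i < k → j < k → v i = v j → i = j) ∧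
  (∀ i, i + 1 < k → P.EdgeJoins (e i) (v i) (v (i + 1)))

/-- a simple cycle in the fs-relation graph with `ℓ ≥ 2` distinct vertices and
`ℓ` distinct edges. -/
def IsCycle (ℓ : ℕ) (u : ℕ → I) (c : ℕ → A) : Prop :=
  2 ≤ ℓ ∧
  (∀ i j, i < ℓ → j < ℓ → u i = u j → i = j) ∧
  (∀ i j, i < ℓ → j < ℓ → c i = c j → i = j) ∧
  (∀ i, i < ℓ → P.EdgeJoins (c i) (u i) (u ((i + 1) % ℓ)))

/-- a bad subgraph of type `G1`: a simple path on `k ≥ 4` vertices whose first and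
last edges belong to `E2`, whose second and second-to-last edges belong to `E1`,
and whose second and second-to-last vertices lie in `S1 ∩ F2`. -/
def HasBadG1 : Prop :=
  ∃ (k : ℕ) (v : ℕ → I) (e : ℕ → A),
    4 ≤ k ∧ P.IsPath k v e ∧
    e 0 ∈ P.A2 ∧ e 1 ∈ P.A1 ∧ e (k - 2) ∈ P.A2 ∧ e (k - 3) ∈ P.A1 ∧
    v 1 ∈ P.S1 ∧ v 1 ∈ P.F2 ∧ v (k - 2) ∈ P.S1 ∧ v (k - 2) ∈ P.F2

/-- a bad subgraph of type `G2`: a simple cycle together with a simple path on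
`k ≥ 3` vertices meeting the cycle exactly in its last vertex, whose first edge is
in `E2`, second edge in `E1`, and second vertex in `S1 ∩ F2`. -/
def HasBadG2 : Prop :=
  ∃ (ℓ : ℕ) (u : ℕ → I) (c : ℕ → A) (k : ℕ) (v : ℕ → I) (e : ℕ → A),
    P.IsCycle ℓ u c ∧ 3 ≤ k ∧ P.IsPath k v e ∧
    (∃ j, j < ℓ ∧ u j = v (k - 1)) ∧
    (∀ i, i < k - 1 → ∀ j, j < ℓ → v i ≠ u j) ∧
    e 0 ∈ P.A2 ∧ e 1 ∈ P.A1 ∧ v 1 ∈ P.S1 ∧ v 1 ∈ P.F2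

/-- a bad subgraph of type `G3`: two distinct cycles lying in the same connected
component of the fs-relation graph. -/
def HasBadG3 : Prop :=
  ∃ (ℓ : ℕ) (u : ℕ → I) (c : ℕ → A) (ℓ' : ℕ) (u' : ℕ → I) (c' : ℕ → A),
    P.IsCycle ℓ u c ∧ P.IsCycle ℓ' u' c' ∧
    {a : A | ∃ i, i < ℓ ∧ c i = a} ≠ {a : A | ∃ i, i < ℓ' ∧ c' i = a} ∧
    Relation.ReflTransGen P.Adj (u 0) (u' 0)

end TwoWPM
namespace TwoWPM

variable {A I : Type} [Fintype A] [DecidableEq A] [Fintype I] [DecidableEq I]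
variable (P : TwoWPM A I)

/-! ### Basic facts -/

lemma bestIn_mem {x : A} {s : Finset I} (hs : s.Nonempty) : P.bestIn x s ∈ s := by
  rw [bestIn, dif_pos hs]
  exact (Finset.exists_min_image s (P.rank x) hs).choose_spec.1

lemma bestIn_min {x : A} {s : Finset I} (hs : s.Nonempty) {p : I} (hp : p ∈ s) :
    P.rank x (P.bestIn x s) ≤ P.rank x p := by
  rw [bestIn, dif_pos hs]
  exact (Finset.exists_min_image s (P.rank x) hs).choose_spec.2 p hp

lemma trichotomy {x : A} {p q : I} (h : p ≠ q) : P.Prefers x p q ∨ P.Prefers x q p := by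
  rcases lt_or_gt_of_ne (fun he => h (P.rank_inj x he)) with h' | h'
  · exact Or.inl h'
  · exact Or.inr h'

lemma not_prefers_self (x : A) (p : I) : ¬ P.Prefers x p p := lt_irrefl _

lemma prefers_ne {x : A} {p q : I} (h : P.Prefers x p q) : p ≠ q := by
  rintro rfl; exact P.not_prefers_self x p h

lemma prefers_asymm {x : A} {p q : I} (h : P.Prefers x p q) : ¬ P.Prefers x q p :=
  lt_asymm h

lemma mem_A1_or_A2 (a : A) : a ∈ P.A1 ∨ a ∈ P.A2 := by
  have : a ∈ P.A1 ∪ P.A2 := by rw [P.union_eq]; exact Finset.mem_univ a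
  exact Finset.mem_union.mp this

lemma not_mem_A1 {a : A} (h : a ∈ P.A2) : a ∉ P.A1 :=
  fun h1 => (Finset.disjoint_left.mp P.disj) h1 h

lemma mem_A2_of_not_A1 {a : A} (h : a ∉ P.A1) : a ∈ P.A2 :=
  (P.mem_A1_or_A2 a).resolve_left h

lemma weight_A1 {a : A} (h : a ∈ P.A1) : P.weight a = P.w1 := if_pos h

lemma weight_A2 {a : A} (h : a ∈ P.A2) : P.weight a = P.w2 := if_neg (P.not_mem_A1 h)

lemma weight_pos (a : A) : 0 < P.weight a := by
  unfold weight; split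
  · exact lt_trans P.hw2 P.hw12
  · exact P.hw2

lemma weight_le_w1 (a : A) : P.weight a ≤ P.w1 := by
  unfold weight; split
  · exact le_refl _
  · exact le_of_lt P.hw12

/-! ### Cardinality facts -/

lemma cardA : P.A1.card + P.A2.card = Fintype.card A := by
  rw [← Finset.card_union_of_disjoint P.disj, P.union_eq, Finset.card_univ]

lemma sdiff_nonempty_of_card' {J : Type} [Fintype J] [DecidableEq J] {s : Finset J} {n : ℕ}
    (h : s.card < n) (hn : n ≤ Fintype.card J) :
    (Finset.univ \ s).Nonempty := by
  rw [Finset.sdiff_nonempty]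
  intro hsub
  have := Finset.card_le_card hsub
  simp only [Finset.card_univ] at this
  omega

lemma sdiff_F1_nonempty : (Finset.univ \ P.F1).Nonempty := by
  refine sdiff_nonempty_of_card' ?_ (le_refl _)
  calc P.F1.card ≤ P.A1.card := Finset.card_image_le
    _ ≤ Fintype.card A := by simpa using Finset.card_le_univ P.A1
    _ < Fintype.card I := P.card_lt

lemma sdiff_F1F2_nonempty : (Finset.univ \ (P.F1 ∪ P.F2)).Nonempty := by
  refine sdiff_nonempty_of_card' ?_ (le_refl _)
  calc (P.F1 ∪ P.F2).card ≤ P.F1.card + P.F2.card := Finset.card_union_le _ _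
    _ ≤ P.A1.card + P.A2.card := Nat.add_le_add Finset.card_image_le Finset.card_image_le
    _ = Fintype.card A := P.cardA
    _ < Fintype.card I := P.card_lt

/-! ### Properties of f1, s1, f2, s2 -/

lemma f1_min (x : A) (p : I) : ¬ P.Prefers x p (P.f1 x) := by
  have : Nonempty I := Fintype.card_pos_iff.mp (lt_of_le_of_lt (Nat.zero_le _) P.card_lt)
  exact not_lt.mpr (P.bestIn_min Finset.univ_nonempty (Finset.mem_univ p))

lemma s1_not_F1 (x : A) : P.s1 x ∉ P.F1 := by
  have := P.bestIn_mem (x := x) P.sdiff_F1_nonempty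
  exact (Finset.mem_sdiff.mp this).2

lemma mem_F1_of_prefers_s1 {x : A} {p : I} (h : P.Prefers x p (P.s1 x)) : p ∈ P.F1 := by
  by_contra hp
  exact absurd h (not_lt.mpr (P.bestIn_min P.sdiff_F1_nonempty
    (Finset.mem_sdiff.mpr ⟨Finset.mem_univ p, hp⟩)))

lemma f2_not_F1 (y : A) : P.f2 y ∉ P.F1 := by
  have := P.bestIn_mem (x := y) P.sdiff_F1_nonempty
  exact (Finset.mem_sdiff.mp this).2

lemma mem_F1_of_prefers_f2 {y : A} {p : I} (h : P.Prefers y p (P.f2 y)) : p ∈ P.F1 := by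
  by_contra hp
  exact absurd h (not_lt.mpr (P.bestIn_min P.sdiff_F1_nonempty
    (Finset.mem_sdiff.mpr ⟨Finset.mem_univ p, hp⟩)))

lemma s2_not_F1F2 (y : A) : P.s2 y ∉ P.F1 ∪ P.F2 := by
  have := P.bestIn_mem (x := y) P.sdiff_F1F2_nonempty
  exact (Finset.mem_sdiff.mp this).2

lemma mem_F1F2_of_prefers_s2 {y : A} {p : I} (h : P.Prefers y p (P.s2 y)) :
    p ∈ P.F1 ∪ P.F2 := by
  by_contra hp
  exact absurd h (not_lt.mpr (P.bestIn_min P.sdiff_F1F2_nonempty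
    (Finset.mem_sdiff.mpr ⟨Finset.mem_univ p, hp⟩)))

lemma f1_mem_F1 {x : A} (h : x ∈ P.A1) : P.f1 x ∈ P.F1 := Finset.mem_image_of_mem _ h

lemma f2_mem_F2 {y : A} (h : y ∈ P.A2) : P.f2 y ∈ P.F2 := Finset.mem_image_of_mem _ h

lemma F2_not_F1 {q : I} (h : q ∈ P.F2) : q ∉ P.F1 := by
  obtain ⟨y, _, rfl⟩ := Finset.mem_image.mp h
  exact P.f2_not_F1 y

lemma prefers_f1 {x : A} {p : I} (h : p ≠ P.f1 x) : P.Prefers x (P.f1 x) p :=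
  ((P.trichotomy h).resolve_left (P.f1_min x p))

lemma prefers_s1 {x : A} {p : I} (hne : p ≠ P.s1 x) (hp : p ∉ P.F1) :
    P.Prefers x (P.s1 x) p :=
  (P.trichotomy hne).resolve_left (fun h => hp (P.mem_F1_of_prefers_s1 h))

lemma prefers_f2 {y : A} {p : I} (hne : p ≠ P.f2 y) (hp : p ∉ P.F1) :
    P.Prefers y (P.f2 y) p :=
  (P.trichotomy hne).resolve_left (fun h => hp (P.mem_F1_of_prefers_f2 h))

lemma prefers_s2 {y : A} {p : I} (hne : p ≠ P.s2 y) (hp : p ∉ P.F1 ∪ P.F2) :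
    P.Prefers y (P.s2 y) p :=
  (P.trichotomy hne).resolve_left (fun h => hp (P.mem_F1F2_of_prefers_s2 h))

lemma prefers_f1_s1 {x : A} (h : x ∈ P.A1) : P.Prefers x (P.f1 x) (P.s1 x) :=
  P.prefers_f1 (fun he => P.s1_not_F1 x (he ▸ P.f1_mem_F1 h))

lemma prefers_f2_s2 {y : A} (h : y ∈ P.A2) : P.Prefers y (P.f2 y) (P.s2 y) :=
  P.prefers_f2 (fun he => P.s2_not_F1F2 y (he ▸ Finset.mem_union_right _ (P.f2_mem_F2 h)))
    (fun hf => P.s2_not_F1F2 y (Finset.mem_union_left _ hf))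

/-! ### Machinery for comparing matchings -/

lemma morePopular_iff {M M' : A → I} {T : Finset A} (h : ∀ a ∉ T, M' a = M a) :
    P.MorePopular M' M ↔
      (∑ x ∈ T, if P.Prefers x (M x) (M' x) then P.weight x else 0) <
        ∑ x ∈ T, if P.Prefers x (M' x) (M x) then P.weight x else 0 := by
  unfold MorePopular
  rw [← Finset.sum_subset (Finset.subset_univ T) (fun x _ hx => ?_),
      ← Finset.sum_subset (Finset.subset_univ T) (fun x _ hx => ?_)]
  · rw [h x hx, if_neg (P.not_prefers_self x (M x))]
  · rw [h x hx, if_neg (P.not_prefers_self x (M x))]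

lemma injective_mod {M M' : A → I} (hM : Function.Injective M) (T : Finset A)
    (hout : ∀ a ∉ T, M' a = M a)
    (hinjT : ∀ a ∈ T, ∀ b ∈ T, M' a = M' b → a = b)
    (hnew : ∀ a ∈ T, (∃ b ∈ T, M' a = M b) ∨ (∀ b, M b ≠ M' a)) :
    Function.Injective M' := by
  have key : ∀ a b, a ∈ T → b ∉ T → M' a ≠ M' b := by
    intro a b ha hb he
    rw [hout b hb] at he
    rcases hnew a ha with ⟨c, hc, hce⟩ | hfree
    · rw [hce] at he; exact hb (hM he ▸ hc)
    · exact hfree b he.symm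
  intro a b he
  by_cases ha : a ∈ T <;> by_cases hb : b ∈ T
  · exact hinjT a ha b hb he
  · exact absurd he (key a b ha hb)
  · exact absurd he.symm (key b a hb ha)
  · rw [hout a ha, hout b hb] at he; exact hM he

lemma ite_weight_nonneg (x : A) (c : Prop) [Decidable c] :
    (0:ℝ) ≤ (if c then P.weight x else 0) := by
  split
  · exact le_of_lt (P.weight_pos x)
  · exact le_refl _

lemma ite_weight_le (x : A) (c : Prop) [Decidable c] :
    (if c then P.weight x else 0) ≤ P.weight x := by
  split
  · exact le_refl _
  · exact le_of_lt (P.weight_pos x)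

set_option linter.unusedSectionVars false

lemma injT_pair {M' : A → I} {a b : A} (h : M' a ≠ M' b) :
    ∀ x ∈ ({a, b} : Finset A), ∀ y ∈ ({a, b} : Finset A), M' x = M' y → x = y := by
  intro x hx y hy hxy
  simp only [Finset.mem_insert, Finset.mem_singleton] at hx hy
  rcases hx with rfl | rfl <;> rcases hy with rfl | rfl
  · rfl
  · exact absurd hxy h
  · exact absurd hxy.symm h
  · rfl

lemma injT_triple {M' : A → I} {a b c : A} (h1 : M' a ≠ M' b) (h2 : M' a ≠ M' c)
    (h3 : M' b ≠ M' c) :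
    ∀ x ∈ ({a, b, c} : Finset A), ∀ y ∈ ({a, b, c} : Finset A), M' x = M' y → x = y := by
  intro x hx y hy hxy
  simp only [Finset.mem_insert, Finset.mem_singleton] at hx hy
  rcases hx with rfl | rfl | rfl <;> rcases hy with rfl | rfl | rfl
  · rfl
  · exact absurd hxy h1
  · exact absurd hxy h2
  · exact absurd hxy.symm h1
  · rfl
  · exact absurd hxy h3
  · exact absurd hxy.symm h2
  · exact absurd hxy.symm h3
  · rfl

lemma injT_quad {M' : A → I} {a b c d : A} (h1 : M' a ≠ M' b) (h2 : M' a ≠ M' c)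
    (h3 : M' a ≠ M' d) (h4 : M' b ≠ M' c) (h5 : M' b ≠ M' d) (h6 : M' c ≠ M' d) :
    ∀ x ∈ ({a, b, c, d} : Finset A), ∀ y ∈ ({a, b, c, d} : Finset A), M' x = M' y → x = y := by
  intro x hx y hy hxy
  simp only [Finset.mem_insert, Finset.mem_singleton] at hx hy
  rcases hx with rfl | rfl | rfl | rfl <;> rcases hy with rfl | rfl | rfl | rfl
  · rfl
  · exact absurd hxy h1
  · exact absurd hxy h2
  · exact absurd hxy h3
  · exact absurd hxy.symm h1
  · rfl
  · exact absurd hxy h4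
  · exact absurd hxy h5
  · exact absurd hxy.symm h2
  · exact absurd hxy.symm h4
  · rfl
  · exact absurd hxy h6
  · exact absurd hxy.symm h3
  · exact absurd hxy.symm h5
  · exact absurd hxy.symm h6
  · rfl

/-! ### Necessity: condition on F1 items -/

lemma L1 {M : A → I} (hinj : Function.Injective M)
    (hpop : ∀ M', Function.Injective M' → ¬ P.MorePopular M' M) :
    ∀ p ∈ P.F1, ∃ x ∈ P.A1, P.f1 x = p ∧ M x = p := by
  intro p hp
  obtain ⟨x₀, hx₀, rfl⟩ := Finset.mem_image.mp hp
  by_contra hno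
  push_neg at hno
  have hMx₀ : M x₀ ≠ P.f1 x₀ := fun h => hno x₀ hx₀ rfl h
  have hprefx₀ : P.Prefers x₀ (P.f1 x₀) (M x₀) := P.prefers_f1 hMx₀
  by_cases hfree : ∀ a, M a ≠ P.f1 x₀
  · -- the item f1 x₀ is free: promote x₀
    set M' : A → I := Function.update M x₀ (P.f1 x₀) with hM'
    have hout : ∀ a ∉ ({x₀} : Finset A), M' a = M a := by
      intro a ha
      simp only [Finset.mem_singleton] at ha
      simp [hM', Function.update_of_ne ha]
    refine hpop M' ?_ ?_
    · refine injective_mod hinj {x₀} hout ?_ ?_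
      · intro a ha b hb _
        simp only [Finset.mem_singleton] at ha hb; rw [ha, hb]
      · intro a ha
        simp only [Finset.mem_singleton] at ha; subst ha
        right; simpa [hM'] using hfree
    · rw [P.morePopular_iff hout]
      simp only [Finset.sum_singleton, hM', Function.update_self]
      rw [if_pos hprefx₀, if_neg (P.prefers_asymm hprefx₀), P.weight_A1 hx₀]
      exact lt_trans P.hw2 P.hw12
  · push_neg at hfree
    obtain ⟨z, hz⟩ := hfree
    have hzx₀ : z ≠ x₀ := fun h => hMx₀ (h ▸ hz)
    rcases P.mem_A1_or_A2 z with hzA1 | hzA2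
    · -- z ∈ A1 holds f1 x₀ but f1 z ≠ f1 x₀
      have hf1z : P.f1 z ≠ P.f1 x₀ := fun h => hno z hzA1 h hz
      have hprefz : P.Prefers z (P.f1 z) (M z) := P.prefers_f1 (by rw [hz]; exact Ne.symm hf1z)
      by_cases hq : M x₀ = P.f1 z
      · -- swap x₀ and z
        set M' : A → I := fun a => if a = x₀ then P.f1 x₀ else if a = z then M x₀ else M a
          with hM'
        have hM'x₀ : M' x₀ = P.f1 x₀ := by simp [hM']
        have hM'z : M' z = M x₀ := by simp [hM', hzx₀]
        have hout : ∀ a ∉ ({x₀, z} : Finset A), M' a = M a := by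
          intro a ha
          simp only [Finset.mem_insert, Finset.mem_singleton, not_or] at ha
          simp [hM', ha.1, ha.2]
        refine hpop M' ?_ ?_
        · refine injective_mod hinj {x₀, z} hout ?_ ?_
          · exact injT_pair (by rw [hM'x₀, hM'z]; exact Ne.symm hMx₀)
          · intro a ha
            simp only [Finset.mem_insert, Finset.mem_singleton] at ha
            left
            rcases ha with rfl | rfl
            · exact ⟨z, by simp, by rw [hM'x₀, hz]⟩
            · exact ⟨x₀, by simp, by rw [hM'z]⟩
        · rw [P.morePopular_iff hout]
          rw [Finset.sum_pair hzx₀.symm, Finset.sum_pair hzx₀.symm, hM'x₀, hM'z]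
          have h2 : P.Prefers z (M x₀) (M z) := hq ▸ hprefz
          rw [if_pos hprefx₀, if_pos h2, if_neg (P.prefers_asymm hprefx₀),
            if_neg (P.prefers_asymm h2)]
          have := P.weight_pos x₀; have := P.weight_pos z
          linarith
      · by_cases hqfree : ∀ a, M a ≠ P.f1 z
        · -- f1 z free : x₀ → f1 x₀, z → f1 z
          set M' : A → I := fun a => if a = x₀ then P.f1 x₀ else if a = z then P.f1 z else M a
            with hM'
          have hM'x₀ : M' x₀ = P.f1 x₀ := by simp [hM']
          have hM'z : M' z = P.f1 z := by simp [hM', hzx₀]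
          have hout : ∀ a ∉ ({x₀, z} : Finset A), M' a = M a := by
            intro a ha
            simp only [Finset.mem_insert, Finset.mem_singleton, not_or] at ha
            simp [hM', ha.1, ha.2]
          refine hpop M' ?_ ?_
          · refine injective_mod hinj {x₀, z} hout ?_ ?_
            · exact injT_pair (by rw [hM'x₀, hM'z]; exact Ne.symm hf1z)
            · intro a ha
              simp only [Finset.mem_insert, Finset.mem_singleton] at ha
              rcases ha with rfl | rfl
              · exact Or.inl ⟨z, by simp, by rw [hM'x₀, hz]⟩
              · right; rw [hM'z]; exact hqfree
          · rw [P.morePopular_iff hout]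
            rw [Finset.sum_pair hzx₀.symm, Finset.sum_pair hzx₀.symm, hM'x₀, hM'z]
            rw [if_pos hprefx₀, if_pos hprefz, if_neg (P.prefers_asymm hprefx₀),
              if_neg (P.prefers_asymm hprefz)]
            have := P.weight_pos x₀; have := P.weight_pos z
            linarith
        · push_neg at hqfree
          obtain ⟨z', hz'⟩ := hqfree
          have hz'x₀ : z' ≠ x₀ := fun h => hq (h ▸ hz')
          have hz'z : z' ≠ z := fun h => hf1z (by rw [← hz', h, hz])
          -- rotate: x₀ → f1 x₀, z → f1 z, z' → M x₀
          set M' : A → I := fun a => if a = x₀ then P.f1 x₀ else if a = z then P.f1 z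
            else if a = z' then M x₀ else M a with hM'
          have hM'x₀ : M' x₀ = P.f1 x₀ := by simp [hM']
          have hM'z : M' z = P.f1 z := by simp [hM', hzx₀]
          have hM'z' : M' z' = M x₀ := by simp [hM', hz'x₀, hz'z]
          have hout : ∀ a ∉ ({x₀, z, z'} : Finset A), M' a = M a := by
            intro a ha
            simp only [Finset.mem_insert, Finset.mem_singleton, not_or] at ha
            simp [hM', ha.1, ha.2.1, ha.2.2]
          have hMzz' : M x₀ ≠ P.f1 z := hq
          refine hpop M' ?_ ?_
          · refine injective_mod hinj {x₀, z, z'} hout ?_ ?_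
            · refine injT_triple ?_ ?_ ?_
              · rw [hM'x₀, hM'z]; exact Ne.symm hf1z
              · rw [hM'x₀, hM'z']; exact Ne.symm hMx₀
              · rw [hM'z, hM'z']; exact Ne.symm hq
            · intro a ha
              simp only [Finset.mem_insert, Finset.mem_singleton] at ha
              left
              rcases ha with rfl | rfl | rfl
              · exact ⟨z, by simp, by rw [hM'x₀, hz]⟩
              · exact ⟨z', by simp, by rw [hM'z, hz']⟩
              · exact ⟨x₀, by simp, by rw [hM'z']⟩
          · rw [P.morePopular_iff hout]
            have hnot1 : x₀ ∉ ({z, z'} : Finset A) := by simp [hzx₀.symm, hz'x₀.symm]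
            rw [Finset.sum_insert hnot1, Finset.sum_insert hnot1,
              Finset.sum_pair hz'z.symm, Finset.sum_pair hz'z.symm,
              hM'x₀, hM'z, hM'z']
            rw [if_pos hprefx₀, if_pos hprefz, if_neg (P.prefers_asymm hprefx₀),
              if_neg (P.prefers_asymm hprefz)]
            have h1 := P.ite_weight_le z' (P.Prefers z' (M z') (M x₀))
            have h2 := P.ite_weight_nonneg z' (P.Prefers z' (M x₀) (M z'))
            have h3 := P.weight_le_w1 z'
            rw [P.weight_A1 hx₀, P.weight_A1 hzA1]
            have := P.hw2; have := P.hw12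
            linarith
    · -- z ∈ A2 holds f1 x₀ : swap x₀ and z
      set M' : A → I := fun a => if a = x₀ then P.f1 x₀ else if a = z then M x₀ else M a
        with hM'
      have hM'x₀ : M' x₀ = P.f1 x₀ := by simp [hM']
      have hM'z : M' z = M x₀ := by simp [hM', hzx₀]
      have hout : ∀ a ∉ ({x₀, z} : Finset A), M' a = M a := by
        intro a ha
        simp only [Finset.mem_insert, Finset.mem_singleton, not_or] at ha
        simp [hM', ha.1, ha.2]
      refine hpop M' ?_ ?_
      · refine injective_mod hinj {x₀, z} hout ?_ ?_
        · exact injT_pair (by rw [hM'x₀, hM'z]; exact Ne.symm hMx₀)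
        · intro a ha
          simp only [Finset.mem_insert, Finset.mem_singleton] at ha
          left
          rcases ha with rfl | rfl
          · exact ⟨z, by simp, by rw [hM'x₀, hz]⟩
          · exact ⟨x₀, by simp, by rw [hM'z]⟩
      · rw [P.morePopular_iff hout]
        rw [Finset.sum_pair hzx₀.symm, Finset.sum_pair hzx₀.symm, hM'x₀, hM'z]
        rw [if_pos hprefx₀, if_neg (P.prefers_asymm hprefx₀)]
        have h1 := P.ite_weight_le z (P.Prefers z (M z) (M x₀))
        have h2 := P.ite_weight_nonneg z (P.Prefers z (M x₀) (M z))
        rw [P.weight_A1 hx₀, P.weight_A2 hzA2]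
        rw [P.weight_A2 hzA2] at h1 h2
        have := P.hw12
        linarith

/-! ### Necessity: A1 applicants get their first or second item -/

lemma L2 {M : A → I} (hinj : Function.Injective M)
    (hpop : ∀ M', Function.Injective M' → ¬ P.MorePopular M' M) :
    ∀ x ∈ P.A1, M x = P.f1 x ∨ M x = P.s1 x := by
  intro x₀ hx₀
  by_contra hno
  push_neg at hno
  obtain ⟨hnf, hns⟩ := hno
  have hL1 := P.L1 hinj hpop
  have hMF1 : M x₀ ∉ P.F1 := by
    intro hmem
    obtain ⟨x', _, hfx', hMx'⟩ := hL1 _ hmem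
    have hx'eq : x' = x₀ := hinj hMx'
    subst hx'eq
    exact hnf hfx'.symm
  have hprefx₀ : P.Prefers x₀ (P.s1 x₀) (M x₀) := P.prefers_s1 hns hMF1
  by_cases hfree : ∀ a, M a ≠ P.s1 x₀
  · set M' : A → I := Function.update M x₀ (P.s1 x₀) with hM'
    have hout : ∀ a ∉ ({x₀} : Finset A), M' a = M a := by
      intro a ha
      simp only [Finset.mem_singleton] at ha
      simp [hM', Function.update_of_ne ha]
    refine hpop M' ?_ ?_
    · refine injective_mod hinj {x₀} hout ?_ ?_
      · intro a ha b hb _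
        simp only [Finset.mem_singleton] at ha hb; rw [ha, hb]
      · intro a ha
        simp only [Finset.mem_singleton] at ha; subst ha
        right; simpa [hM'] using hfree
    · rw [P.morePopular_iff hout]
      simp only [Finset.sum_singleton, hM', Function.update_self]
      rw [if_pos hprefx₀, if_neg (P.prefers_asymm hprefx₀)]
      exact P.weight_pos x₀
  · push_neg at hfree
    obtain ⟨z, hz⟩ := hfree
    have hzx₀ : z ≠ x₀ := fun h => hns (h ▸ hz)
    rcases P.mem_A1_or_A2 z with hzA1 | hzA2
    · -- z ∈ A1 holds s1 x₀ : rotate through f1 z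
      have hMzf1 : M z ≠ P.f1 z := by
        rw [hz]; exact fun h => P.s1_not_F1 x₀ (h ▸ P.f1_mem_F1 hzA1)
      have hprefz : P.Prefers z (P.f1 z) (M z) := P.prefers_f1 hMzf1
      obtain ⟨x', hx'A1, hfx', hMx'⟩ := hL1 _ (P.f1_mem_F1 hzA1)
      have hx'z : x' ≠ z := fun h => hMzf1 (h ▸ hMx')
      have hx'x₀ : x' ≠ x₀ := fun h => hMF1 (by rw [← h, hMx']; exact P.f1_mem_F1 hzA1)
      set M' : A → I := fun a => if a = x₀ then P.s1 x₀ else if a = z then P.f1 z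
        else if a = x' then M x₀ else M a with hM'
      have hM'x₀ : M' x₀ = P.s1 x₀ := by simp [hM']
      have hM'z : M' z = P.f1 z := by simp [hM', hzx₀]
      have hM'x' : M' x' = M x₀ := by simp [hM', hx'x₀, hx'z]
      have hd1 : P.s1 x₀ ≠ P.f1 z := fun h => P.s1_not_F1 x₀ (h ▸ P.f1_mem_F1 hzA1)
      have hd2 : P.s1 x₀ ≠ M x₀ := Ne.symm hns
      have hd3 : P.f1 z ≠ M x₀ := fun h => hMF1 (h ▸ P.f1_mem_F1 hzA1)
      have hout : ∀ a ∉ ({x₀, z, x'} : Finset A), M' a = M a := by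
        intro a ha
        simp only [Finset.mem_insert, Finset.mem_singleton, not_or] at ha
        simp [hM', ha.1, ha.2.1, ha.2.2]
      refine hpop M' ?_ ?_
      · refine injective_mod hinj {x₀, z, x'} hout ?_ ?_
        · refine injT_triple ?_ ?_ ?_
          · rw [hM'x₀, hM'z]; exact hd1
          · rw [hM'x₀, hM'x']; exact hd2
          · rw [hM'z, hM'x']; exact hd3
        · intro a ha
          simp only [Finset.mem_insert, Finset.mem_singleton] at ha
          left
          rcases ha with rfl | rfl | rfl
          · exact ⟨z, by simp, by rw [hM'x₀, hz]⟩
          · exact ⟨x', by simp, by rw [hM'z, hMx']⟩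
          · exact ⟨x₀, by simp, by rw [hM'x']⟩
      · rw [P.morePopular_iff hout]
        have hnot1 : x₀ ∉ ({z, x'} : Finset A) := by simp [hzx₀.symm, hx'x₀.symm]
        rw [Finset.sum_insert hnot1, Finset.sum_insert hnot1,
          Finset.sum_pair hx'z.symm, Finset.sum_pair hx'z.symm,
          hM'x₀, hM'z, hM'x']
        rw [if_pos hprefx₀, if_pos hprefz, if_neg (P.prefers_asymm hprefx₀),
          if_neg (P.prefers_asymm hprefz)]
        have h1 := P.ite_weight_le x' (P.Prefers x' (M x') (M x₀))
        have h2 := P.ite_weight_nonneg x' (P.Prefers x' (M x₀) (M x'))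
        have h3 := P.weight_le_w1 x'
        rw [P.weight_A1 hx₀, P.weight_A1 hzA1]
        have := P.hw2; have := P.hw12
        linarith
    · -- z ∈ A2 holds s1 x₀ : swap x₀ and z
      set M' : A → I := fun a => if a = x₀ then P.s1 x₀ else if a = z then M x₀ else M a
        with hM'
      have hM'x₀ : M' x₀ = P.s1 x₀ := by simp [hM']
      have hM'z : M' z = M x₀ := by simp [hM', hzx₀]
      have hout : ∀ a ∉ ({x₀, z} : Finset A), M' a = M a := by
        intro a ha
        simp only [Finset.mem_insert, Finset.mem_singleton, not_or] at ha
        simp [hM', ha.1, ha.2]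
      refine hpop M' ?_ ?_
      · refine injective_mod hinj {x₀, z} hout ?_ ?_
        · exact injT_pair (by rw [hM'x₀, hM'z]; exact Ne.symm hns)
        · intro a ha
          simp only [Finset.mem_insert, Finset.mem_singleton] at ha
          left
          rcases ha with rfl | rfl
          · exact ⟨z, by simp, by rw [hM'x₀, hz]⟩
          · exact ⟨x₀, by simp, by rw [hM'z]⟩
      · rw [P.morePopular_iff hout]
        rw [Finset.sum_pair hzx₀.symm, Finset.sum_pair hzx₀.symm, hM'x₀, hM'z]
        rw [if_pos hprefx₀, if_neg (P.prefers_asymm hprefx₀)]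
        have h1 := P.ite_weight_le z (P.Prefers z (M z) (M x₀))
        have h2 := P.ite_weight_nonneg z (P.Prefers z (M x₀) (M z))
        rw [P.weight_A1 hx₀, P.weight_A2 hzA2]
        rw [P.weight_A2 hzA2] at h1 h2
        have := P.hw12
        linarith

/-! ### Necessity: condition on F2 items -/

lemma L3 {M : A → I} (hinj : Function.Injective M)
    (hpop : ∀ M', Function.Injective M' → ¬ P.MorePopular M' M) :
    ∀ q ∈ P.F2, ∃ y ∈ P.A2, P.f2 y = q ∧ M y = q := by
  have hL1 := P.L1 hinj hpop
  have hL2 := P.L2 hinj hpop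
  have hnotF1 : ∀ y ∈ P.A2, M y ∉ P.F1 := by
    intro y hy hmem
    obtain ⟨x', hx'A1, _, hMx'⟩ := hL1 _ hmem
    have : x' = y := hinj hMx'
    exact P.not_mem_A1 hy (this ▸ hx'A1)
  intro q hq
  obtain ⟨y₀, hy₀, rfl⟩ := Finset.mem_image.mp hq
  by_contra hno
  push_neg at hno
  have hMy₀ : M y₀ ≠ P.f2 y₀ := hno y₀ hy₀ rfl
  have hMy₀F1 : M y₀ ∉ P.F1 := hnotF1 y₀ hy₀
  have hqF1 : P.f2 y₀ ∉ P.F1 := P.f2_not_F1 y₀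
  have hprefy₀ : P.Prefers y₀ (P.f2 y₀) (M y₀) := P.prefers_f2 hMy₀ hMy₀F1
  by_cases hfree : ∀ a, M a ≠ P.f2 y₀
  · set M' : A → I := Function.update M y₀ (P.f2 y₀) with hM'
    have hout : ∀ a ∉ ({y₀} : Finset A), M' a = M a := by
      intro a ha
      simp only [Finset.mem_singleton] at ha
      simp [hM', Function.update_of_ne ha]
    refine hpop M' ?_ ?_
    · refine injective_mod hinj {y₀} hout ?_ ?_
      · intro a ha b hb _
        simp only [Finset.mem_singleton] at ha hb; rw [ha, hb]
      · intro a ha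
        simp only [Finset.mem_singleton] at ha; subst ha
        right; simpa [hM'] using hfree
    · rw [P.morePopular_iff hout]
      simp only [Finset.sum_singleton, hM', Function.update_self]
      rw [if_pos hprefy₀, if_neg (P.prefers_asymm hprefy₀)]
      exact P.weight_pos y₀
  · push_neg at hfree
    obtain ⟨z, hz⟩ := hfree
    have hzy₀ : z ≠ y₀ := fun h => hMy₀ (h ▸ hz)
    rcases P.mem_A1_or_A2 z with hzA1 | hzA2
    · -- z ∈ A1 holds f2 y₀ : rotate through f1 z
      have hMzf1 : M z ≠ P.f1 z := by
        rw [hz]; exact fun h => hqF1 (h ▸ P.f1_mem_F1 hzA1)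
      have hprefz : P.Prefers z (P.f1 z) (M z) := P.prefers_f1 hMzf1
      obtain ⟨x', hx'A1, hfx', hMx'⟩ := hL1 _ (P.f1_mem_F1 hzA1)
      have hx'z : x' ≠ z := fun h => hMzf1 (h ▸ hMx')
      have hx'y₀ : x' ≠ y₀ := fun h => hMy₀F1 (by rw [← h, hMx']; exact P.f1_mem_F1 hzA1)
      set M' : A → I := fun a => if a = y₀ then P.f2 y₀ else if a = z then P.f1 z
        else if a = x' then M y₀ else M a with hM'
      have hM'y₀ : M' y₀ = P.f2 y₀ := by simp [hM']
      have hM'z : M' z = P.f1 z := by simp [hM', hzy₀]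
      have hM'x' : M' x' = M y₀ := by simp [hM', hx'y₀, hx'z]
      have hd1 : P.f2 y₀ ≠ P.f1 z := fun h => hqF1 (h ▸ P.f1_mem_F1 hzA1)
      have hd2 : P.f2 y₀ ≠ M y₀ := Ne.symm hMy₀
      have hd3 : P.f1 z ≠ M y₀ := fun h => hMy₀F1 (h ▸ P.f1_mem_F1 hzA1)
      have hout : ∀ a ∉ ({y₀, z, x'} : Finset A), M' a = M a := by
        intro a ha
        simp only [Finset.mem_insert, Finset.mem_singleton, not_or] at ha
        simp [hM', ha.1, ha.2.1, ha.2.2]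
      refine hpop M' ?_ ?_
      · refine injective_mod hinj {y₀, z, x'} hout ?_ ?_
        · refine injT_triple ?_ ?_ ?_
          · rw [hM'y₀, hM'z]; exact hd1
          · rw [hM'y₀, hM'x']; exact hd2
          · rw [hM'z, hM'x']; exact hd3
        · intro a ha
          simp only [Finset.mem_insert, Finset.mem_singleton] at ha
          left
          rcases ha with rfl | rfl | rfl
          · exact ⟨z, by simp, by rw [hM'y₀, hz]⟩
          · exact ⟨x', by simp, by rw [hM'z, hMx']⟩
          · exact ⟨y₀, by simp, by rw [hM'x']⟩
      · rw [P.morePopular_iff hout]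
        have hnot1 : y₀ ∉ ({z, x'} : Finset A) := by simp [hzy₀.symm, hx'y₀.symm]
        rw [Finset.sum_insert hnot1, Finset.sum_insert hnot1,
          Finset.sum_pair hx'z.symm, Finset.sum_pair hx'z.symm,
          hM'y₀, hM'z, hM'x']
        rw [if_pos hprefy₀, if_pos hprefz, if_neg (P.prefers_asymm hprefy₀),
          if_neg (P.prefers_asymm hprefz)]
        have h1 := P.ite_weight_le x' (P.Prefers x' (M x') (M y₀))
        have h2 := P.ite_weight_nonneg x' (P.Prefers x' (M y₀) (M x'))
        have h3 := P.weight_le_w1 x'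
        rw [P.weight_A2 hy₀, P.weight_A1 hzA1]
        have := P.hw2; have := P.hw12
        linarith
    · -- z ∈ A2 holds f2 y₀ with f2 z ≠ f2 y₀
      have hf2z : P.f2 z ≠ P.f2 y₀ := fun h => hno z hzA2 h hz
      have hMzf2 : M z ≠ P.f2 z := by rw [hz]; exact Ne.symm hf2z
      have hprefz : P.Prefers z (P.f2 z) (M z) := P.prefers_f2 hMzf2 (hz ▸ hqF1)
      by_cases hrfree : ∀ a, M a ≠ P.f2 z
      · -- f2 z free : y₀ → f2 y₀, z → f2 z
        set M' : A → I := fun a => if a = y₀ then P.f2 y₀ else if a = z then P.f2 z else M a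
          with hM'
        have hM'y₀ : M' y₀ = P.f2 y₀ := by simp [hM']
        have hM'z : M' z = P.f2 z := by simp [hM', hzy₀]
        have hout : ∀ a ∉ ({y₀, z} : Finset A), M' a = M a := by
          intro a ha
          simp only [Finset.mem_insert, Finset.mem_singleton, not_or] at ha
          simp [hM', ha.1, ha.2]
        refine hpop M' ?_ ?_
        · refine injective_mod hinj {y₀, z} hout ?_ ?_
          · exact injT_pair (by rw [hM'y₀, hM'z]; exact Ne.symm hf2z)
          · intro a ha
            simp only [Finset.mem_insert, Finset.mem_singleton] at ha
            rcases ha with rfl | rfl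
            · exact Or.inl ⟨z, by simp, by rw [hM'y₀, hz]⟩
            · right; rw [hM'z]; exact hrfree
        · rw [P.morePopular_iff hout]
          rw [Finset.sum_pair hzy₀.symm, Finset.sum_pair hzy₀.symm, hM'y₀, hM'z]
          rw [if_pos hprefy₀, if_pos hprefz, if_neg (P.prefers_asymm hprefy₀),
            if_neg (P.prefers_asymm hprefz)]
          have := P.weight_pos y₀; have := P.weight_pos z
          linarith
      · push_neg at hrfree
        obtain ⟨z'', hz''⟩ := hrfree
        have hz''z : z'' ≠ z := fun h => hMzf2 (h ▸ hz'')
        by_cases hz''y₀ : z'' = y₀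
        · -- M y₀ = f2 z : swap y₀ and z
          have hry₀ : M y₀ = P.f2 z := hz''y₀ ▸ hz''
          set M' : A → I := fun a => if a = y₀ then P.f2 y₀ else if a = z then M y₀ else M a
            with hM'
          have hM'y₀ : M' y₀ = P.f2 y₀ := by simp [hM']
          have hM'z : M' z = M y₀ := by simp [hM', hzy₀]
          have hprefz' : P.Prefers z (M y₀) (M z) := hry₀ ▸ hprefz
          have hout : ∀ a ∉ ({y₀, z} : Finset A), M' a = M a := by
            intro a ha
            simp only [Finset.mem_insert, Finset.mem_singleton, not_or] at ha
            simp [hM', ha.1, ha.2]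
          refine hpop M' ?_ ?_
          · refine injective_mod hinj {y₀, z} hout ?_ ?_
            · exact injT_pair (by rw [hM'y₀, hM'z]; exact Ne.symm hMy₀)
            · intro a ha
              simp only [Finset.mem_insert, Finset.mem_singleton] at ha
              left
              rcases ha with rfl | rfl
              · exact ⟨z, by simp, by rw [hM'y₀, hz]⟩
              · exact ⟨y₀, by simp, by rw [hM'z]⟩
          · rw [P.morePopular_iff hout]
            rw [Finset.sum_pair hzy₀.symm, Finset.sum_pair hzy₀.symm, hM'y₀, hM'z]
            rw [if_pos hprefy₀, if_pos hprefz', if_neg (P.prefers_asymm hprefy₀),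
              if_neg (P.prefers_asymm hprefz')]
            have := P.weight_pos y₀; have := P.weight_pos z
            linarith
        · -- z'' ∉ {y₀, z} holds f2 z
          have hrq : P.f2 z ≠ P.f2 y₀ := hf2z
          have hrMy₀ : P.f2 z ≠ M y₀ := fun h => hz''y₀ (hinj (hz''.trans h))
          have hy₀z'' : y₀ ≠ z'' := fun h => hz''y₀ h.symm
          rcases P.mem_A1_or_A2 z'' with hz''A1 | hz''A2
          · -- z'' ∈ A1 : M z'' = s1 z'' = f2 z ; 4-rotation
            have hMz''f1 : M z'' ≠ P.f1 z'' := by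
              rw [hz'']; exact fun h => P.f2_not_F1 z (h ▸ P.f1_mem_F1 hz''A1)
            have hprefz'' : P.Prefers z'' (P.f1 z'') (M z'') := P.prefers_f1 hMz''f1
            obtain ⟨x₃, hx₃A1, hfx₃, hMx₃⟩ := hL1 _ (P.f1_mem_F1 hz''A1)
            have hx₃z'' : x₃ ≠ z'' := fun h => hMz''f1 (h ▸ hMx₃)
            have hx₃y₀ : x₃ ≠ y₀ :=
              fun h => hMy₀F1 (by rw [← h, hMx₃]; exact P.f1_mem_F1 hz''A1)
            have hx₃z : x₃ ≠ z := by
              intro h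
              rw [← h, hMx₃] at hz
              exact hqF1 (hz ▸ P.f1_mem_F1 hz''A1)
            set M' : A → I := fun a => if a = y₀ then P.f2 y₀ else if a = z then P.f2 z
              else if a = z'' then P.f1 z'' else if a = x₃ then M y₀ else M a with hM'
            have hM'y₀ : M' y₀ = P.f2 y₀ := by simp [hM']
            have hM'z : M' z = P.f2 z := by simp [hM', hzy₀]
            have hM'z'' : M' z'' = P.f1 z'' := by simp [hM', hz''y₀, hz''z]
            have hM'x₃ : M' x₃ = M y₀ := by simp [hM', hx₃y₀, hx₃z, hx₃z'']
            have hd1 : P.f2 y₀ ≠ P.f2 z := Ne.symm hf2z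
            have hd2 : P.f2 y₀ ≠ P.f1 z'' := fun h => hqF1 (h ▸ P.f1_mem_F1 hz''A1)
            have hd3 : P.f2 y₀ ≠ M y₀ := Ne.symm hMy₀
            have hd4 : P.f2 z ≠ P.f1 z'' := fun h => P.f2_not_F1 z (h ▸ P.f1_mem_F1 hz''A1)
            have hd5 : P.f2 z ≠ M y₀ := hrMy₀
            have hd6 : P.f1 z'' ≠ M y₀ := fun h => hMy₀F1 (h ▸ P.f1_mem_F1 hz''A1)
            have hout : ∀ a ∉ ({y₀, z, z'', x₃} : Finset A), M' a = M a := by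
              intro a ha
              simp only [Finset.mem_insert, Finset.mem_singleton, not_or] at ha
              simp [hM', ha.1, ha.2.1, ha.2.2.1, ha.2.2.2]
            refine hpop M' ?_ ?_
            · refine injective_mod hinj {y₀, z, z'', x₃} hout ?_ ?_
              · refine injT_quad ?_ ?_ ?_ ?_ ?_ ?_
                · rw [hM'y₀, hM'z]; exact hd1
                · rw [hM'y₀, hM'z'']; exact hd2
                · rw [hM'y₀, hM'x₃]; exact hd3
                · rw [hM'z, hM'z'']; exact hd4
                · rw [hM'z, hM'x₃]; exact hd5
                · rw [hM'z'', hM'x₃]; exact hd6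
              · intro a ha
                simp only [Finset.mem_insert, Finset.mem_singleton] at ha
                left
                rcases ha with rfl | rfl | rfl | rfl
                · exact ⟨z, by simp, by rw [hM'y₀, hz]⟩
                · exact ⟨z'', by simp, by rw [hM'z, hz'']⟩
                · exact ⟨x₃, by simp, by rw [hM'z'', hMx₃]⟩
                · exact ⟨y₀, by simp, by rw [hM'x₃]⟩
            · rw [P.morePopular_iff hout]
              have hny₀ : y₀ ∉ ({z, z'', x₃} : Finset A) := by
                simp [hzy₀.symm, hy₀z'', hx₃y₀.symm]
              have hnz : z ∉ ({z'', x₃} : Finset A) := by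
                simp [hz''z.symm, hx₃z.symm]
              rw [Finset.sum_insert hny₀, Finset.sum_insert hny₀,
                Finset.sum_insert hnz, Finset.sum_insert hnz,
                Finset.sum_pair hx₃z''.symm, Finset.sum_pair hx₃z''.symm,
                hM'y₀, hM'z, hM'z'', hM'x₃]
              rw [if_pos hprefy₀, if_pos hprefz, if_pos hprefz'',
                if_neg (P.prefers_asymm hprefy₀), if_neg (P.prefers_asymm hprefz),
                if_neg (P.prefers_asymm hprefz'')]
              have h1 := P.ite_weight_le x₃ (P.Prefers x₃ (M x₃) (M y₀))
              have h2 := P.ite_weight_nonneg x₃ (P.Prefers x₃ (M y₀) (M x₃))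
              have h3 := P.weight_le_w1 x₃
              rw [P.weight_A2 hy₀, P.weight_A2 hzA2, P.weight_A1 hz''A1]
              have := P.hw2; have := P.hw12
              linarith
          · -- z'' ∈ A2 : 3-rotation, gain 2w2 lose ≤ w2
            set M' : A → I := fun a => if a = y₀ then P.f2 y₀ else if a = z then P.f2 z
              else if a = z'' then M y₀ else M a with hM'
            have hM'y₀ : M' y₀ = P.f2 y₀ := by simp [hM']
            have hM'z : M' z = P.f2 z := by simp [hM', hzy₀]
            have hM'z'' : M' z'' = M y₀ := by simp [hM', hz''y₀, hz''z]
            have hout : ∀ a ∉ ({y₀, z, z''} : Finset A), M' a = M a := by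
              intro a ha
              simp only [Finset.mem_insert, Finset.mem_singleton, not_or] at ha
              simp [hM', ha.1, ha.2.1, ha.2.2]
            refine hpop M' ?_ ?_
            · refine injective_mod hinj {y₀, z, z''} hout ?_ ?_
              · refine injT_triple ?_ ?_ ?_
                · rw [hM'y₀, hM'z]; exact Ne.symm hf2z
                · rw [hM'y₀, hM'z'']; exact Ne.symm hMy₀
                · rw [hM'z, hM'z'']; exact hrMy₀
              · intro a ha
                simp only [Finset.mem_insert, Finset.mem_singleton] at ha
                left
                rcases ha with rfl | rfl | rfl
                · exact ⟨z, by simp, by rw [hM'y₀, hz]⟩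
                · exact ⟨z'', by simp, by rw [hM'z, hz'']⟩
                · exact ⟨y₀, by simp, by rw [hM'z'']⟩
            · rw [P.morePopular_iff hout]
              have hny₀ : y₀ ∉ ({z, z''} : Finset A) := by
                simp [hzy₀.symm, hy₀z'']
              rw [Finset.sum_insert hny₀, Finset.sum_insert hny₀,
                Finset.sum_pair hz''z.symm, Finset.sum_pair hz''z.symm,
                hM'y₀, hM'z, hM'z'']
              rw [if_pos hprefy₀, if_pos hprefz, if_neg (P.prefers_asymm hprefy₀),
                if_neg (P.prefers_asymm hprefz)]
              have h1 := P.ite_weight_le z'' (P.Prefers z'' (M z'') (M y₀))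
              have h2 := P.ite_weight_nonneg z'' (P.Prefers z'' (M y₀) (M z''))
              rw [P.weight_A2 hy₀, P.weight_A2 hzA2, P.weight_A2 hz''A2]
              rw [P.weight_A2 hz''A2] at h1 h2
              have := P.hw2
              linarith

/-! ### Necessity: A2 applicants get their first or second item -/

lemma L4 {M : A → I} (hinj : Function.Injective M)
    (hpop : ∀ M', Function.Injective M' → ¬ P.MorePopular M' M) :
    ∀ y ∈ P.A2, M y = P.f2 y ∨ M y = P.s2 y := by
  have hL1 := P.L1 hinj hpop
  have hL3 := P.L3 hinj hpop
  have hnotF1 : ∀ y ∈ P.A2, M y ∉ P.F1 := by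
    intro y hy hmem
    obtain ⟨x', hx'A1, _, hMx'⟩ := hL1 _ hmem
    have : x' = y := hinj hMx'
    exact P.not_mem_A1 hy (this ▸ hx'A1)
  intro y₀ hy₀
  by_contra hno
  push_neg at hno
  obtain ⟨hnf, hns⟩ := hno
  have hMy₀F1 : M y₀ ∉ P.F1 := hnotF1 y₀ hy₀
  have hMy₀F2 : M y₀ ∉ P.F2 := by
    intro hmem
    obtain ⟨y', _, hfy', hMy'⟩ := hL3 _ hmem
    have hy'eq : y' = y₀ := hinj hMy'
    subst hy'eq
    exact hnf hfy'.symm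
  have hMy₀F12 : M y₀ ∉ P.F1 ∪ P.F2 := by
    simp only [Finset.mem_union, not_or]; exact ⟨hMy₀F1, hMy₀F2⟩
  have hqF12 : P.s2 y₀ ∉ P.F1 ∪ P.F2 := P.s2_not_F1F2 y₀
  have hqF1 : P.s2 y₀ ∉ P.F1 := fun h => hqF12 (Finset.mem_union_left _ h)
  have hqF2 : P.s2 y₀ ∉ P.F2 := fun h => hqF12 (Finset.mem_union_right _ h)
  have hprefy₀ : P.Prefers y₀ (P.s2 y₀) (M y₀) := P.prefers_s2 hns hMy₀F12
  by_cases hfree : ∀ a, M a ≠ P.s2 y₀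
  · set M' : A → I := Function.update M y₀ (P.s2 y₀) with hM'
    have hout : ∀ a ∉ ({y₀} : Finset A), M' a = M a := by
      intro a ha
      simp only [Finset.mem_singleton] at ha
      simp [hM', Function.update_of_ne ha]
    refine hpop M' ?_ ?_
    · refine injective_mod hinj {y₀} hout ?_ ?_
      · intro a ha b hb _
        simp only [Finset.mem_singleton] at ha hb; rw [ha, hb]
      · intro a ha
        simp only [Finset.mem_singleton] at ha; subst ha
        right; simpa [hM'] using hfree
    · rw [P.morePopular_iff hout]
      simp only [Finset.sum_singleton, hM', Function.update_self]
      rw [if_pos hprefy₀, if_neg (P.prefers_asymm hprefy₀)]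
      exact P.weight_pos y₀
  · push_neg at hfree
    obtain ⟨z, hz⟩ := hfree
    have hzy₀ : z ≠ y₀ := fun h => hns (h ▸ hz)
    rcases P.mem_A1_or_A2 z with hzA1 | hzA2
    · -- z ∈ A1 holds s2 y₀ : rotate through f1 z
      have hMzf1 : M z ≠ P.f1 z := by
        rw [hz]; exact fun h => hqF1 (h ▸ P.f1_mem_F1 hzA1)
      have hprefz : P.Prefers z (P.f1 z) (M z) := P.prefers_f1 hMzf1
      obtain ⟨x', hx'A1, hfx', hMx'⟩ := hL1 _ (P.f1_mem_F1 hzA1)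
      have hx'z : x' ≠ z := fun h => hMzf1 (h ▸ hMx')
      have hx'y₀ : x' ≠ y₀ := fun h => hMy₀F1 (by rw [← h, hMx']; exact P.f1_mem_F1 hzA1)
      set M' : A → I := fun a => if a = y₀ then P.s2 y₀ else if a = z then P.f1 z
        else if a = x' then M y₀ else M a with hM'
      have hM'y₀ : M' y₀ = P.s2 y₀ := by simp [hM']
      have hM'z : M' z = P.f1 z := by simp [hM', hzy₀]
      have hM'x' : M' x' = M y₀ := by simp [hM', hx'y₀, hx'z]
      have hd1 : P.s2 y₀ ≠ P.f1 z := fun h => hqF1 (h ▸ P.f1_mem_F1 hzA1)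
      have hd2 : P.s2 y₀ ≠ M y₀ := Ne.symm hns
      have hd3 : P.f1 z ≠ M y₀ := fun h => hMy₀F1 (h ▸ P.f1_mem_F1 hzA1)
      have hout : ∀ a ∉ ({y₀, z, x'} : Finset A), M' a = M a := by
        intro a ha
        simp only [Finset.mem_insert, Finset.mem_singleton, not_or] at ha
        simp [hM', ha.1, ha.2.1, ha.2.2]
      refine hpop M' ?_ ?_
      · refine injective_mod hinj {y₀, z, x'} hout ?_ ?_
        · refine injT_triple ?_ ?_ ?_
          · rw [hM'y₀, hM'z]; exact hd1
          · rw [hM'y₀, hM'x']; exact hd2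
          · rw [hM'z, hM'x']; exact hd3
        · intro a ha
          simp only [Finset.mem_insert, Finset.mem_singleton] at ha
          left
          rcases ha with rfl | rfl | rfl
          · exact ⟨z, by simp, by rw [hM'y₀, hz]⟩
          · exact ⟨x', by simp, by rw [hM'z, hMx']⟩
          · exact ⟨y₀, by simp, by rw [hM'x']⟩
      · rw [P.morePopular_iff hout]
        have hnot1 : y₀ ∉ ({z, x'} : Finset A) := by simp [hzy₀.symm, hx'y₀.symm]
        rw [Finset.sum_insert hnot1, Finset.sum_insert hnot1,
          Finset.sum_pair hx'z.symm, Finset.sum_pair hx'z.symm,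
          hM'y₀, hM'z, hM'x']
        rw [if_pos hprefy₀, if_pos hprefz, if_neg (P.prefers_asymm hprefy₀),
          if_neg (P.prefers_asymm hprefz)]
        have h1 := P.ite_weight_le x' (P.Prefers x' (M x') (M y₀))
        have h2 := P.ite_weight_nonneg x' (P.Prefers x' (M y₀) (M x'))
        have h3 := P.weight_le_w1 x'
        rw [P.weight_A2 hy₀, P.weight_A1 hzA1]
        have := P.hw2; have := P.hw12
        linarith
    · -- z ∈ A2 holds s2 y₀ : rotate through f2 z whose holder is in A2 by L3
      have hMzf2 : M z ≠ P.f2 z := by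
        rw [hz]; exact fun h => hqF2 (h ▸ P.f2_mem_F2 hzA2)
      have hprefz : P.Prefers z (P.f2 z) (M z) := P.prefers_f2 hMzf2 (hz ▸ hqF1)
      obtain ⟨y'', hy''A2, hfy'', hMy''⟩ := hL3 _ (P.f2_mem_F2 hzA2)
      have hy''z : y'' ≠ z := fun h => hMzf2 (h ▸ hMy'')
      have hy''y₀ : y'' ≠ y₀ :=
        fun h => hMy₀F2 (by rw [← h, hMy'']; exact P.f2_mem_F2 hzA2)
      set M' : A → I := fun a => if a = y₀ then P.s2 y₀ else if a = z then P.f2 z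
        else if a = y'' then M y₀ else M a with hM'
      have hM'y₀ : M' y₀ = P.s2 y₀ := by simp [hM']
      have hM'z : M' z = P.f2 z := by simp [hM', hzy₀]
      have hM'y'' : M' y'' = M y₀ := by simp [hM', hy''y₀, hy''z]
      have hd1 : P.s2 y₀ ≠ P.f2 z := fun h => hqF2 (h ▸ P.f2_mem_F2 hzA2)
      have hd2 : P.s2 y₀ ≠ M y₀ := Ne.symm hns
      have hd3 : P.f2 z ≠ M y₀ := fun h => hMy₀F2 (h ▸ P.f2_mem_F2 hzA2)
      have hout : ∀ a ∉ ({y₀, z, y''} : Finset A), M' a = M a := by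
        intro a ha
        simp only [Finset.mem_insert, Finset.mem_singleton, not_or] at ha
        simp [hM', ha.1, ha.2.1, ha.2.2]
      refine hpop M' ?_ ?_
      · refine injective_mod hinj {y₀, z, y''} hout ?_ ?_
        · refine injT_triple ?_ ?_ ?_
          · rw [hM'y₀, hM'z]; exact hd1
          · rw [hM'y₀, hM'y'']; exact hd2
          · rw [hM'z, hM'y'']; exact hd3
        · intro a ha
          simp only [Finset.mem_insert, Finset.mem_singleton] at ha
          left
          rcases ha with rfl | rfl | rfl
          · exact ⟨z, by simp, by rw [hM'y₀, hz]⟩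
          · exact ⟨y'', by simp, by rw [hM'z, hMy'']⟩
          · exact ⟨y₀, by simp, by rw [hM'y'']⟩
      · rw [P.morePopular_iff hout]
        have hnot1 : y₀ ∉ ({z, y''} : Finset A) := by simp [hzy₀.symm, hy''y₀.symm]
        rw [Finset.sum_insert hnot1, Finset.sum_insert hnot1,
          Finset.sum_pair hy''z.symm, Finset.sum_pair hy''z.symm,
          hM'y₀, hM'z, hM'y'']
        rw [if_pos hprefy₀, if_pos hprefz, if_neg (P.prefers_asymm hprefy₀),
          if_neg (P.prefers_asymm hprefz)]
        have h1 := P.ite_weight_le y'' (P.Prefers y'' (M y'') (M y₀))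
        have h2 := P.ite_weight_nonneg y'' (P.Prefers y'' (M y₀) (M y''))
        rw [P.weight_A2 hy₀, P.weight_A2 hzA2, P.weight_A2 hy''A2]
        rw [P.weight_A2 hy''A2] at h1 h2
        have := P.hw2
        linarith

/-! ### Sufficiency: a well-formed matching is popular -/

lemma sum_weight_card {T : Finset A} {c : ℝ} (h : ∀ a ∈ T, P.weight a = c) :
    ∑ a ∈ T, P.weight a = T.card * c := by
  rw [Finset.sum_congr rfl h, Finset.sum_const, nsmul_eq_mul]

lemma wellFormed_popular (hw : 2 * P.w2 ≤ P.w1) {M : A → I} (hWF : P.IsWellFormed M) :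
    P.IsPopular M := by
  obtain ⟨hinj, h1, h2, h3, h4⟩ := hWF
  refine ⟨hinj, ?_⟩
  intro M' hM'inj hmp
  -- the groups of improving / worsening applicants
  set B1 : Finset A := Finset.univ.filter (fun a => a ∈ P.A1 ∧ P.Prefers a (M' a) (M a))
    with hB1
  set B2 : Finset A := Finset.univ.filter (fun a => a ∈ P.A2 ∧ P.Prefers a (M' a) (M a))
    with hB2
  set W1 : Finset A := Finset.univ.filter (fun a => a ∈ P.A1 ∧ P.Prefers a (M a) (M' a))
    with hW1
  set W2 : Finset A := Finset.univ.filter (fun a => a ∈ P.A2 ∧ P.Prefers a (M a) (M' a))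
    with hW2
  -- the map sending an applicant to the M-holder of its M'-item
  set ψ : A → A := fun a => if h : ∃ b, M b = M' a then h.choose else a with hψdef
  have ψspec : ∀ a, (∃ b, M b = M' a) → M (ψ a) = M' a := by
    intro a h
    simp only [hψdef]
    rw [dif_pos h]
    exact h.choose_spec
  -- basic facts about improvers in A1
  have hB1fact : ∀ x ∈ B1, M' x ∈ P.F1 := by
    intro x hx
    rw [hB1, Finset.mem_filter] at hx
    obtain ⟨-, hxA1, hpref⟩ := hx
    rcases h1 x hxA1 with hMx | hMx
    · exact absurd (hMx ▸ hpref) (P.f1_min x (M' x))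
    · exact P.mem_F1_of_prefers_s1 (hMx ▸ hpref)
  have hexF1 : ∀ a : A, M' a ∈ P.F1 → ∃ b, M b = M' a := by
    intro a ha
    obtain ⟨x', _, _, hMx'⟩ := h3 _ ha
    exact ⟨x', hMx'⟩
  have hexF2 : ∀ a : A, M' a ∈ P.F2 → ∃ b, M b = M' a := by
    intro a ha
    obtain ⟨y', _, _, hMy'⟩ := h4 _ ha
    exact ⟨y', hMy'⟩
  -- if M' a ∈ F1 and a improves, then ψ a is a worsened A1-applicant
  have hpsiF1 : ∀ a, M' a ∈ P.F1 → P.Prefers a (M' a) (M a) → ψ a ∈ W1 := by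
    intro a ha hpref
    obtain ⟨x', hx'A1, hfx', hMx'⟩ := h3 _ ha
    have hM : M (ψ a) = M' a := ψspec a ⟨x', hMx'⟩
    have hψeq : ψ a = x' := hinj (hM.trans hMx'.symm)
    have hψa : ψ a ≠ a := by
      intro h
      rw [h] at hM
      exact P.prefers_ne hpref hM.symm
    have hne : M' (ψ a) ≠ M (ψ a) := by
      intro h
      rw [hM] at h
      exact hψa (hM'inj h)
    have hf1 : M (ψ a) = P.f1 (ψ a) := by rw [hψeq, hMx', ← hfx']
    rw [hW1, Finset.mem_filter]
    refine ⟨Finset.mem_univ _, hψeq ▸ hx'A1, ?_⟩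
    rw [hf1]
    exact P.prefers_f1 (hf1 ▸ hne)
  -- improvers in A2
  have hB2fact : ∀ y ∈ B2, M' y ∈ P.F1 ∪ P.F2 := by
    intro y hy
    rw [hB2, Finset.mem_filter] at hy
    obtain ⟨-, hyA2, hpref⟩ := hy
    rcases h2 y hyA2 with hMy | hMy
    · exact Finset.mem_union_left _ (P.mem_F1_of_prefers_f2 (hMy ▸ hpref))
    · exact P.mem_F1F2_of_prefers_s2 (hMy ▸ hpref)
  have hexB2 : ∀ y ∈ B2, ∃ b, M b = M' y := by
    intro y hy
    rcases Finset.mem_union.mp (hB2fact y hy) with h | h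
    · exact hexF1 y h
    · exact hexF2 y h
  -- the three classes of improvers in A2
  set B2a : Finset A := B2.filter (fun y => M' y ∈ P.F1) with hB2a
  set B2b : Finset A := B2.filter
    (fun y => M' y ∉ P.F1 ∧ P.Prefers (ψ y) (M (ψ y)) (M' (ψ y))) with hB2b
  set B2c : Finset A := B2.filter
    (fun y => M' y ∉ P.F1 ∧ P.Prefers (ψ y) (M' (ψ y)) (M (ψ y))) with hB2c
  -- facts for the F2 case
  have hpsiF2 : ∀ y ∈ B2, M' y ∉ P.F1 →
      ψ y ∈ P.A2 ∧ M (ψ y) = P.f2 (ψ y) ∧ M' (ψ y) ≠ M (ψ y) := by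
    intro y hy hnF1
    have hF2 : M' y ∈ P.F2 := (Finset.mem_union.mp (hB2fact y hy)).resolve_left hnF1
    obtain ⟨y', hy'A2, hfy', hMy'⟩ := h4 _ hF2
    have hM : M (ψ y) = M' y := ψspec y ⟨y', hMy'⟩
    have hψeq : ψ y = y' := hinj (hM.trans hMy'.symm)
    have hψy : ψ y ≠ y := by
      intro h
      rw [h] at hM
      rw [hB2, Finset.mem_filter] at hy
      exact P.prefers_ne hy.2.2 hM.symm
    refine ⟨hψeq ▸ hy'A2, by rw [hψeq, hMy', ← hfy'], ?_⟩
    intro h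
    rw [hM] at h
    exact hψy (hM'inj h)
  have hcover : B2 ⊆ B2a ∪ B2b ∪ B2c := by
    intro y hy
    by_cases hF1 : M' y ∈ P.F1
    · exact Finset.mem_union_left _ (Finset.mem_union_left _
        (Finset.mem_filter.mpr ⟨hy, hF1⟩))
    · obtain ⟨-, -, hne⟩ := hpsiF2 y hy hF1
      rcases P.trichotomy (x := ψ y) hne with hp | hp
      · exact Finset.mem_union_right _ (Finset.mem_filter.mpr ⟨hy, hF1, hp⟩)
      · exact Finset.mem_union_left _ (Finset.mem_union_right _
          (Finset.mem_filter.mpr ⟨hy, hF1, hp⟩))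
  -- ψ is injective on improvers
  have hψinj : ∀ a ∈ B1 ∪ B2, ∀ b ∈ B1 ∪ B2, ψ a = ψ b → a = b := by
    have hex : ∀ a ∈ B1 ∪ B2, ∃ c, M c = M' a := by
      intro a ha
      rcases Finset.mem_union.mp ha with h | h
      · exact hexF1 a (hB1fact a h)
      · exact hexB2 a h
    intro a ha b hb hab
    have h1' := ψspec a (hex a ha)
    have h2' := ψspec b (hex b hb)
    apply hM'inj
    rw [← h1', ← h2', hab]
  have hsub1 : B1 ⊆ B1 ∪ B2 := Finset.subset_union_left
  have hsub2 : B2 ⊆ B1 ∪ B2 := Finset.subset_union_right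
  have hsubB2a : B2a ⊆ B2 := Finset.filter_subset _ _
  have hsubB2b : B2b ⊆ B2 := Finset.filter_subset _ _
  have hsubB2c : B2c ⊆ B2 := Finset.filter_subset _ _
  -- cardinality estimates
  have hC1 : B1.card + B2a.card ≤ W1.card := by
    have hdisj : Disjoint B1 B2a := by
      rw [Finset.disjoint_left]
      intro a ha ha'
      rw [hB1, Finset.mem_filter] at ha
      have := hsubB2a ha'
      rw [hB2, Finset.mem_filter] at this
      exact P.not_mem_A1 this.2.1 ha.2.1
    rw [← Finset.card_union_of_disjoint hdisj]
    apply Finset.card_le_card_of_injOn ψ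
    · intro a ha
      rcases Finset.mem_union.mp ha with h | h
      · have hm := h
        rw [hB1, Finset.mem_filter] at hm
        exact hpsiF1 a (hB1fact a h) hm.2.2
      · have hyB2 := hsubB2a h
        rw [hB2a, Finset.mem_filter] at h
        have hpref : P.Prefers a (M' a) (M a) := by
          rw [hB2, Finset.mem_filter] at hyB2; exact hyB2.2.2
        exact hpsiF1 a h.2 hpref
    · intro a ha b hb hab
      apply hψinj a ?_ b ?_ hab
      · rcases Finset.mem_union.mp ha with h | h
        · exact hsub1 h
        · exact hsub2 (hsubB2a h)
      · rcases Finset.mem_union.mp hb with h | h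
        · exact hsub1 h
        · exact hsub2 (hsubB2a h)
  have hC2 : B2c.card ≤ B2a.card := by
    apply Finset.card_le_card_of_injOn ψ
    · intro y hy
      have hyB2 := hsubB2c hy
      rw [Finset.mem_coe, hB2c, Finset.mem_filter] at hy
      obtain ⟨-, hnF1, hp⟩ := hy
      obtain ⟨hψA2, hψf2, hψne⟩ := hpsiF2 y hyB2 hnF1
      have hψB2 : ψ y ∈ B2 := by
        rw [hB2, Finset.mem_filter]
        exact ⟨Finset.mem_univ _, hψA2, hp⟩
      rw [Finset.mem_coe, hB2a, Finset.mem_filter]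
      exact ⟨hψB2, P.mem_F1_of_prefers_f2 (hψf2 ▸ hp)⟩
    · intro a ha b hb hab
      exact hψinj a (hsub2 (hsubB2c ha)) b (hsub2 (hsubB2c hb)) hab
  have hC3 : B2b.card ≤ W2.card := by
    apply Finset.card_le_card_of_injOn ψ
    · intro y hy
      have hyB2 := hsubB2b hy
      rw [Finset.mem_coe, hB2b, Finset.mem_filter] at hy
      obtain ⟨-, hnF1, hp⟩ := hy
      obtain ⟨hψA2, -, -⟩ := hpsiF2 y hyB2 hnF1
      rw [Finset.mem_coe, hW2, Finset.mem_filter]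
      exact ⟨Finset.mem_univ _, hψA2, hp⟩
    · intro a ha b hb hab
      exact hψinj a (hsub2 (hsubB2b ha)) b (hsub2 (hsubB2b hb)) hab
  have hC4 : B2.card ≤ B2a.card + B2b.card + B2c.card := by
    calc B2.card ≤ (B2a ∪ B2b ∪ B2c).card := Finset.card_le_card hcover
      _ ≤ (B2a ∪ B2b).card + B2c.card := Finset.card_union_le _ _
      _ ≤ B2a.card + B2b.card + B2c.card :=
          Nat.add_le_add_right (Finset.card_union_le _ _) _
  -- turn the popularity sums into weighted cardinalities
  have hgain : (∑ x : A, if P.Prefers x (M' x) (M x) then P.weight x else 0)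
      = B1.card * P.w1 + B2.card * P.w2 := by
    rw [← Finset.sum_filter]
    have hsplit : Finset.univ.filter (fun a => P.Prefers a (M' a) (M a)) = B1 ∪ B2 := by
      ext a
      simp only [hB1, hB2, Finset.mem_union, Finset.mem_filter, Finset.mem_univ,
        true_and]
      constructor
      · intro h
        rcases P.mem_A1_or_A2 a with h' | h'
        · exact Or.inl ⟨h', h⟩
        · exact Or.inr ⟨h', h⟩
      · rintro (⟨-, h⟩ | ⟨-, h⟩) <;> exact h
    have hdisj : Disjoint B1 B2 := by
      rw [Finset.disjoint_left]
      intro a ha ha'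
      rw [hB1, Finset.mem_filter] at ha
      rw [hB2, Finset.mem_filter] at ha'
      exact P.not_mem_A1 ha'.2.1 ha.2.1
    rw [hsplit, Finset.sum_union hdisj,
      P.sum_weight_card (fun a ha => P.weight_A1 (by rw [hB1, Finset.mem_filter] at ha; exact ha.2.1)),
      P.sum_weight_card (fun a ha => P.weight_A2 (by rw [hB2, Finset.mem_filter] at ha; exact ha.2.1))]
  have hloss : (∑ x : A, if P.Prefers x (M x) (M' x) then P.weight x else 0)
      = W1.card * P.w1 + W2.card * P.w2 := by
    rw [← Finset.sum_filter]
    have hsplit : Finset.univ.filter (fun a => P.Prefers a (M a) (M' a)) = W1 ∪ W2 := by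
      ext a
      simp only [hW1, hW2, Finset.mem_union, Finset.mem_filter, Finset.mem_univ,
        true_and]
      constructor
      · intro h
        rcases P.mem_A1_or_A2 a with h' | h'
        · exact Or.inl ⟨h', h⟩
        · exact Or.inr ⟨h', h⟩
      · rintro (⟨-, h⟩ | ⟨-, h⟩) <;> exact h
    have hdisj : Disjoint W1 W2 := by
      rw [Finset.disjoint_left]
      intro a ha ha'
      rw [hW1, Finset.mem_filter] at ha
      rw [hW2, Finset.mem_filter] at ha'
      exact P.not_mem_A1 ha'.2.1 ha.2.1
    rw [hsplit, Finset.sum_union hdisj,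
      P.sum_weight_card (fun a ha => P.weight_A1 (by rw [hW1, Finset.mem_filter] at ha; exact ha.2.1)),
      P.sum_weight_card (fun a ha => P.weight_A2 (by rw [hW2, Finset.mem_filter] at ha; exact ha.2.1))]
  -- final accounting
  unfold MorePopular at hmp
  rw [hgain, hloss] at hmp
  have c1 : ((B1.card : ℝ) + B2a.card) ≤ W1.card := by exact_mod_cast hC1
  have c2 : ((B2c.card : ℝ)) ≤ B2a.card := by exact_mod_cast hC2
  have c3 : ((B2b.card : ℝ)) ≤ W2.card := by exact_mod_cast hC3
  have c4 : ((B2.card : ℝ)) ≤ B2a.card + B2b.card + B2c.card := by exact_mod_cast hC4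
  have hw2pos := P.hw2
  have hw1pos : (0:ℝ) < P.w1 := lt_trans P.hw2 P.hw12
  nlinarith [mul_nonneg (le_of_lt hw2pos) (Nat.cast_nonneg B2a.card),
    mul_le_mul_of_nonneg_left c4 (le_of_lt hw2pos),
    mul_le_mul_of_nonneg_left c2 (le_of_lt hw2pos),
    mul_le_mul_of_nonneg_left c3 (le_of_lt hw2pos),
    mul_le_mul_of_nonneg_right (show (2:ℝ) * P.w2 ≤ P.w1 from hw) (Nat.cast_nonneg B2a.card),
    mul_le_mul_of_nonneg_right c1 (le_of_lt hw1pos)]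

end TwoWPM
/-- For an instance of the complete and strict 2-weighted popular
matching problem with `w1 ≥ 2 w2`, a matching `M` is a 2-weighted popular matching
if and only if `M` is a well-formed matching. -/
theorem popular_iff_well_formed
    {A I : Type} [Fintype A] [DecidableEq A] [Fintype I] [DecidableEq I]
    (P : TwoWPM A I) (hw : 2 * P.w2 ≤ P.w1) (M : A → I) :
    P.IsPopular M ↔ P.IsWellFormed M := by
  constructor
  · intro hpop
    obtain ⟨hinj, hbest⟩ := hpop
    exact ⟨hinj, P.L2 hinj hbest, P.L4 hinj hbest, P.L1 hinj hbest, P.L3 hinj hbest⟩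
  · intro hWF
    exact P.wellFormed_popular hw hWF
end
end

section
/- If the fs-relation graph of an instance of the complete and strict 2-weighted popular matching problem contains a bad subgraph of type G1, then the instance has no well-formed matching. -/
open scoped Classical
open Finset

noncomputable section

/-- If the fs-relation graph contains a bad subgraph of type `G1`,
then the instance has no well-formed matching. -/
theorem no_well_formed_of_badG1
    {A I : Type} [Fintype A] [DecidableEq A] [Fintype I] [DecidableEq I]
    (P : TwoWPM A I) (h : P.HasBadG1) :
    ¬ P.HasWellFormed := by
  rintro ⟨M, hMinj, hM1, hM2, hF1, hF2⟩
  obtain ⟨k, v, e, hk, ⟨hvinj, hedge⟩, he0, he1, hekm2, hekm3,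
    hv1S1, hv1F2, hvk2S1, hvk2F2⟩ := h
  -- every applicant's matched item is an endpoint of its fs-edge
  have hMe : ∀ a : A, M a = P.fEnd a ∨ M a = P.sEnd a := by
    intro a
    by_cases ha : a ∈ P.A1
    · rcases hM1 a ha with h' | h'
      · left; simp [TwoWPM.fEnd, ha, h']
      · right; simp [TwoWPM.sEnd, ha, h']
    · have ha2 : a ∈ P.A2 := by
        have hu : a ∈ P.A1 ∪ P.A2 := by rw [P.union_eq]; exact Finset.mem_univ a
        rcases Finset.mem_union.mp hu with h' | h'
        · exact absurd h' ha
        · exact h'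
      rcases hM2 a ha2 with h' | h'
      · left; simp [TwoWPM.fEnd, ha, h']
      · right; simp [TwoWPM.sEnd, ha, h']
  have hchoice : ∀ (a : A) (p q : I), P.EdgeJoins a p q → M a = p ∨ M a = q := by
    intro a p q hj
    rcases hj with ⟨hf, hs⟩ | ⟨hf, hs⟩ <;> rcases hMe a with h' | h' <;> rw [h'] <;> tauto
  -- an applicant's edge determines its (unordered) endpoints
  have hEdgeDet : ∀ (a : A) (p q r s : I), P.EdgeJoins a p q → P.EdgeJoins a r s →
      (p = r ∧ q = s) ∨ (p = s ∧ q = r) := by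
    intro a p q r s h1 h2
    rcases h1 with ⟨h1f, h1s⟩ | ⟨h1f, h1s⟩ <;>
      rcases h2 with ⟨h2f, h2s⟩ | ⟨h2f, h2s⟩ <;>
      subst h1f <;> subst h1s <;> tauto
  -- the path edges are pairwise distinct
  have hedgeinj : ∀ i j, i + 1 < k → j + 1 < k → e i = e j → i = j := by
    intro i j hi hj hij
    have h1 := hedge i hi
    have h2 := hedge j hj
    rw [hij] at h1
    rcases hEdgeDet _ _ _ _ _ h1 h2 with ⟨ha, hb⟩ | ⟨ha, hb⟩
    · exact hvinj i j (by omega) (by omega) ha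
    · have e1 := hvinj i (j + 1) (by omega) (by omega) ha
      have e2 := hvinj (i + 1) j (by omega) (by omega) hb
      omega
  -- owners of v 1 and v (k-2)
  obtain ⟨y, hyA2, _, hMy⟩ := hF2 (v 1) hv1F2
  obtain ⟨y', hy'A2, _, hMy'⟩ := hF2 (v (k - 2)) hvk2F2
  -- propagate along the path: M (e (j+1)) = v (j+2)
  have claim : ∀ j, j + 4 ≤ k → M (e (j + 1)) = v (j + 2) := by
    intro j
    induction j with
    | zero =>
      intro hj
      rcases hchoice _ _ _ (hedge 1 (by omega)) with h' | h'
      · exfalso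
        have hey : e 1 = y := hMinj (by rw [h', hMy])
        rw [hey] at he1
        exact absurd he1 (Finset.disjoint_right.mp P.disj hyA2)
      · exact h'
    | succ j ih =>
      intro hj
      have IH := ih (by omega)
      rcases hchoice _ _ _ (hedge (j + 2) (by omega)) with h' | h'
      · exfalso
        have : e (j + 2) = e (j + 1) := hMinj (by rw [h', IH])
        have := hedgeinj (j + 2) (j + 1) (by omega) (by omega) this
        omega
      · exact h'
  have hfin := claim (k - 4) (by omega)
  have h1 : k - 4 + 1 = k - 3 := by omega
  have h2 : k - 4 + 2 = k - 2 := by omega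
  rw [h1, h2] at hfin
  have hey' : e (k - 3) = y' := hMinj (by rw [hfin, hMy'])
  rw [hey'] at hekm3
  exact absurd hekm3 (Finset.disjoint_right.mp P.disj hy'A2)
end
end

section
/- If the fs-relation graph of an instance of the complete and strict 2-weighted popular matching problem contains a bad subgraph of type G2, then the instance has no well-formed matching. -/
open scoped Classical
open Finset

noncomputable section

section Aux
variable {A I : Type} [Fintype A] [DecidableEq A] [Fintype I] [DecidableEq I]
variable (P : TwoWPM A I)

lemma match_endpoints {M : A → I} (hM : P.IsWellFormed M) (a : A) {p q : I}
    (h : P.EdgeJoins a p q) : M a = p ∨ M a = q := by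
  have hmem : a ∈ P.A1 ∨ a ∈ P.A2 := by
    have := Finset.mem_univ a
    rw [← P.union_eq, Finset.mem_union] at this; exact this
  obtain ⟨hinj, h1, h2, _, _⟩ := hM
  rcases hmem with ha | ha
  · have hfs := h1 a ha
    simp only [TwoWPM.EdgeJoins, TwoWPM.fEnd, TwoWPM.sEnd, if_pos ha] at h
    rcases h with ⟨hp, hq⟩ | ⟨hp, hq⟩ <;> rcases hfs with h' | h' <;>
      simp_all
  · have ha1 : a ∉ P.A1 := fun h' => (Finset.disjoint_left.mp P.disj h' ha)
    have hfs := h2 a ha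
    simp only [TwoWPM.EdgeJoins, TwoWPM.fEnd, TwoWPM.sEnd, if_neg ha1] at h
    rcases h with ⟨hp, hq⟩ | ⟨hp, hq⟩ <;> rcases hfs with h' | h' <;>
      simp_all

lemma edgeJoins_pair {a : A} {p q p' q' : I} (h : P.EdgeJoins a p q)
    (h' : P.EdgeJoins a p' q') : (p = p' ∧ q = q') ∨ (p = q' ∧ q = p') := by
  rcases h with ⟨h1, h2⟩ | ⟨h1, h2⟩ <;> rcases h' with ⟨h3, h4⟩ | ⟨h3, h4⟩
  · exact Or.inl ⟨h1 ▸ h3, h2 ▸ h4⟩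
  · exact Or.inr ⟨h1 ▸ h3, h2 ▸ h4⟩
  · exact Or.inr ⟨h2 ▸ h4, h1 ▸ h3⟩
  · exact Or.inl ⟨h2 ▸ h4, h1 ▸ h3⟩

end Aux

/-- If the fs-relation graph contains a bad subgraph of type `G2`,
then the instance has no well-formed matching. -/
theorem no_well_formed_of_badG2
    {A I : Type} [Fintype A] [DecidableEq A] [Fintype I] [DecidableEq I]
    (P : TwoWPM A I) (h : P.HasBadG2) :
    ¬ P.HasWellFormed := by
  rintro ⟨M, hM⟩
  obtain ⟨ℓ, u, c, k, v, e, hcyc, hk, hpath, ⟨j, hj, hju⟩, hdisj, he0, he1, hv1S1, hv1F2⟩ := h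
  obtain ⟨hℓ2, huinj, hcinj, hcedge⟩ := hcyc
  obtain ⟨hvinj, hedge⟩ := hpath
  have hMinj : Function.Injective M := hM.1
  -- the cycle edges occupy all cycle vertices
  have hℓpos : 0 < ℓ := by omega
  set ψ : Fin ℓ → Fin ℓ := fun i =>
    if M (c i) = u i then i else ⟨(i + 1) % ℓ, Nat.mod_lt _ hℓpos⟩ with hψdef
  have hψ : ∀ i : Fin ℓ, M (c i) = u (ψ i) := by
    intro i
    by_cases hc : M (c i) = u i
    · simp only [hψdef, if_pos hc]; exact hc
    · rcases match_endpoints P hM (c i) (hcedge i i.isLt) with h' | h'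
      · exact absurd h' hc
      · simp only [hψdef, if_neg hc]; exact h' 
  have hψinj : Function.Injective ψ := by
    intro i i' hii
    have : M (c i) = M (c i') := by rw [hψ i, hψ i', hii]
    have hcc := hMinj this
    exact Fin.ext (hcinj i i' i.isLt i'.isLt hcc)
  have hψsurj : Function.Surjective ψ := Finite.injective_iff_surjective.mp hψinj
  obtain ⟨i₀, hi₀⟩ := hψsurj ⟨j, hj⟩
  have hcyc_occ : M (c i₀) = v (k - 1) := by
    rw [hψ i₀, hi₀, ← hju]
  -- the path edges are forced toward the cycle
  have base : M (e (k - 2)) = v (k - 2) := by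
    have hek : (k : ℕ) - 2 + 1 < k := by omega
    have hE : P.EdgeJoins (e (k - 2)) (v (k - 2)) (v (k - 2 + 1)) := hedge _ hek
    have hk21 : k - 2 + 1 = k - 1 := by omega
    rw [hk21] at hE
    rcases match_endpoints P hM (e (k - 2)) hE with h' | h'
    · exact h'
    · exfalso
      have : e (k - 2) = c i₀ := hMinj (h'.trans hcyc_occ.symm)
      have hE' : P.EdgeJoins (e (k - 2)) (u i₀) (u ((i₀ + 1) % ℓ)) := by
        rw [this]; exact hcedge i₀ i₀.isLt
      rcases edgeJoins_pair P hE hE' with ⟨h1, _⟩ | ⟨h1, _⟩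
      · exact hdisj (k - 2) (by omega) i₀ i₀.isLt h1
      · exact hdisj (k - 2) (by omega) ((i₀ + 1) % ℓ) (Nat.mod_lt _ hℓpos) h1
  have aux : ∀ d, d ≤ k - 3 → M (e (k - 2 - d)) = v (k - 2 - d) := by
    intro d
    induction d with
    | zero => intro _; simpa using base
    | succ n ih =>
      intro hn
      have ihn := ih (by omega)
      set i := k - 2 - (n + 1) with hi
      have hi1 : i + 1 = k - 2 - n := by omega
      have hik : i + 1 < k := by omega
      have hE : P.EdgeJoins (e i) (v i) (v (i + 1)) := hedge i hik
      rcases match_endpoints P hM (e i) hE with h' | h'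
      · exact h'
      · exfalso
        rw [hi1] at h'
        have hee : e i = e (k - 2 - n) := hMinj (h'.trans ihn.symm)
        have h1 : k - 2 - n = i + 1 := by omega
        have hE2 : P.EdgeJoins (e i) (v (i + 1)) (v (i + 2)) := by
          rw [hee, h1]
          exact hedge (i + 1) (by omega)
        rcases edgeJoins_pair P hE hE2 with ⟨h1, _⟩ | ⟨h1, _⟩
        · have := hvinj i (i + 1) (by omega) (by omega) h1; omega
        · have := hvinj i (i + 2) (by omega) (by omega) h1; omega
  have he1v : M (e 1) = v 1 := by
    have := aux (k - 3) (le_refl _)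
    have h1 : k - 2 - (k - 3) = 1 := by omega
    rwa [h1] at this
  obtain ⟨y, hy2, hfy, hMy⟩ := hM.2.2.2.2 (v 1) hv1F2
  have : y = e 1 := hMinj (hMy.trans he1v.symm)
  exact Finset.disjoint_left.mp P.disj he1 (this ▸ hy2)
end
end

section
/- If the fs-relation graph of an instance of the complete and strict 2-weighted popular matching problem contains a bad subgraph of type G3 (i.e., some connected component contains two distinct cycles), then the instance has no well-formed matching. -/
open scoped Classical
open Finset

noncomputable section

section AuxG3

variable {A I : Type} [Fintype A] [DecidableEq A] [Fintype I] [DecidableEq I]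

/-- auxiliary: `p` can reach the vertex set `C` in exactly `n` steps of `r`. -/
def nearRel (r : I → I → Prop) (C : I → Prop) : ℕ → I → Prop
  | 0, p => C p
  | (n+1), p => ∃ q, r p q ∧ nearRel r C n q

namespace TwoWPM

lemma adj_symm (P : TwoWPM A I) : Symmetric P.Adj :=
  fun _ _ ⟨a, h⟩ => ⟨a, Or.symm h⟩

lemma joins_eq (P : TwoWPM A I) {a : A} {p q p' q' : I}
    (h1 : P.EdgeJoins a p q) (h2 : P.EdgeJoins a p' q') :
    (p = p' ∧ q = q') ∨ (p = q' ∧ q = p') := by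
  rcases h1 with ⟨e1, e2⟩ | ⟨e1, e2⟩ <;> rcases h2 with ⟨f1, f2⟩ | ⟨f1, f2⟩
  · exact Or.inl ⟨e1.symm.trans f1, e2.symm.trans f2⟩
  · exact Or.inr ⟨e1.symm.trans f1, e2.symm.trans f2⟩
  · exact Or.inr ⟨e2.symm.trans f2, e1.symm.trans f1⟩
  · exact Or.inl ⟨e2.symm.trans f2, e1.symm.trans f1⟩

lemma cycle_reach (P : TwoWPM A I) {ℓ : ℕ} {u : ℕ → I} {c : ℕ → A}
    (hc : P.IsCycle ℓ u c) (k : ℕ) :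
    Relation.ReflTransGen P.Adj (u 0) (u (k % ℓ)) := by
  obtain ⟨hl, -, -, hedge⟩ := hc
  induction k with
  | zero =>
      have : (0 : ℕ) % ℓ = 0 := Nat.zero_mod _
      rw [this]
  | succ k ih =>
      have hk : k % ℓ < ℓ := Nat.mod_lt _ (by omega)
      have hmod : (k % ℓ + 1) % ℓ = (k + 1) % ℓ := Nat.mod_add_mod k ℓ 1
      have step : P.Adj (u (k % ℓ)) (u ((k + 1) % ℓ)) := by
        have h := hedge (k % ℓ) hk
        rw [hmod] at h
        exact ⟨c (k % ℓ), h⟩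
      exact ih.tail step

/-- Core counting argument: if a well-formed-style matching (injective, mapping each
applicant to an endpoint of its edge) exists, then there cannot be two cycles in one
component with an edge of the second cycle not lying on the first cycle. -/
lemma coreG3 (P : TwoWPM A I) (M : A → I)
    (hMinj : Function.Injective M) (hMend : ∀ a, M a = P.fEnd a ∨ M a = P.sEnd a)
    {ℓ ℓ' : ℕ} {u u' : ℕ → I} {c c' : ℕ → A}
    (hc : P.IsCycle ℓ u c) (hc' : P.IsCycle ℓ' u' c')
    (i0 : ℕ) (hi0 : i0 < ℓ') (hstar : ∀ i, i < ℓ → c i ≠ c' i0)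
    (hreach : Relation.ReflTransGen P.Adj (u 0) (u' 0)) : False := by
  classical
  obtain ⟨hl, hu, hcinj, hedge⟩ := hc
  obtain ⟨hl', hu', hcinj', hedge'⟩ := hc'
  set astar : A := c' i0 with hastar
  -- the graph with the edge `astar` removed
  set Adj' : I → I → Prop := fun p q => ∃ a : A, a ≠ astar ∧ P.EdgeJoins a p q with hAdj'
  have hAdj'symm : Symmetric Adj' := fun _ _ ⟨a, hne, h⟩ => ⟨a, hne, Or.symm h⟩
  -- endpoints of `astar`
  have hjoin0 : P.EdgeJoins astar (u' i0) (u' ((i0 + 1) % ℓ')) := hedge' i0 hi0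
  -- going around the second cycle avoiding `astar`
  have go : ∀ t, t + 1 ≤ ℓ' →
      Relation.ReflTransGen Adj' (u' ((i0 + 1) % ℓ')) (u' ((i0 + 1 + t) % ℓ')) := by
    intro t
    induction t with
    | zero => intro _; exact Relation.ReflTransGen.refl
    | succ t ih =>
        intro ht
        have prev := ih (by omega)
        set j : ℕ := (i0 + 1 + t) % ℓ' with hj
        have hjlt : j < ℓ' := Nat.mod_lt _ (by omega)
        have hjne : j ≠ i0 := by
          intro hcon
          rcases Nat.lt_or_ge (i0 + 1 + t) ℓ' with hlt | hge
          · rw [hj, Nat.mod_eq_of_lt hlt] at hcon; omega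
          · have h2 : i0 + 1 + t - ℓ' < ℓ' := by omega
            rw [hj, Nat.mod_eq_sub_mod hge, Nat.mod_eq_of_lt h2] at hcon
            omega
        have hcne : c' j ≠ astar := by
          intro hcon
          exact hjne (hcinj' j i0 hjlt hi0 hcon)
        have hmod : (j + 1) % ℓ' = (i0 + 1 + (t + 1)) % ℓ' := by
          rw [hj, Nat.mod_add_mod]
          congr 1
        have step : Adj' (u' j) (u' ((i0 + 1 + (t + 1)) % ℓ')) := by
          refine ⟨c' j, hcne, ?_⟩
          have h := hedge' j hjlt
          rwa [hmod] at h
        exact prev.tail step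
  have around : Relation.ReflTransGen Adj' (u' ((i0 + 1) % ℓ')) (u' i0) := by
    have h := go (ℓ' - 1) (by omega)
    have : (i0 + 1 + (ℓ' - 1)) % ℓ' = i0 := by
      have heq : i0 + 1 + (ℓ' - 1) = i0 + ℓ' := by omega
      rw [heq, Nat.add_mod_right, Nat.mod_eq_of_lt hi0]
    rwa [this] at h
  -- every adjacency is simulated without `astar`
  have adj_to_adj' : ∀ p q : I, P.Adj p q → Relation.ReflTransGen Adj' p q := by
    rintro p q ⟨a, hj⟩
    by_cases ha : a = astar
    · subst ha
      rcases P.joins_eq hj hjoin0 with ⟨hp, hq⟩ | ⟨hp, hq⟩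
      · rw [hp, hq]
        exact (letI : Std.Symm Adj' := ⟨fun a b h => hAdj'symm h⟩; Std.Symm.symm _ _ around)
      · rw [hp, hq]
        exact around
    · exact Relation.ReflTransGen.single ⟨a, ha, hj⟩
  -- the component of `u 0`
  set R : Set I := {p | Relation.ReflTransGen P.Adj (u 0) p} with hR
  have hclosed : ∀ p q, p ∈ R → P.Adj p q → q ∈ R := fun p q hp h => hp.tail h
  have hRlift : ∀ p, p ∈ R → Relation.ReflTransGen Adj' (u 0) p := by
    intro p hp
    induction hp with
    | refl => exact Relation.ReflTransGen.refl
    | tail _ h ih => exact ih.trans (adj_to_adj' _ _ h)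
  -- cycle-1 vertices
  set C1 : I → Prop := fun p => ∃ i, i < ℓ ∧ u i = p with hC1
  have hC1R : ∀ i, i < ℓ → u i ∈ R := by
    intro i hi
    have h := P.cycle_reach ⟨hl, hu, hcinj, hedge⟩ i
    rwa [Nat.mod_eq_of_lt hi] at h
  have hC2R : ∀ j, j < ℓ' → u' j ∈ R := by
    intro j hj
    have h := P.cycle_reach ⟨hl', hu', hcinj', hedge'⟩ j
    rw [Nat.mod_eq_of_lt hj] at h
    exact hreach.trans h
  set near : ℕ → I → Prop := nearRel Adj' C1 with hnear
  -- every vertex of R can reach cycle 1 avoiding astar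
  have hex0 : ∀ p, Relation.ReflTransGen Adj' p (u 0) → ∃ n, near n p := by
    intro p h1
    induction h1 using Relation.ReflTransGen.head_induction_on with
    | refl => exact ⟨0, ⟨0, by omega, rfl⟩⟩
    | head h' _ ih =>
        obtain ⟨n, hn⟩ := ih
        exact ⟨n + 1, _, h', hn⟩
  have hex : ∀ p, p ∈ R → ∃ n, near n p := fun p hp =>
    hex0 p (letI : Std.Symm Adj' := ⟨fun a b h => hAdj'symm h⟩; Std.Symm.symm _ _ (hRlift p hp))
  -- choose for every vertex of R an assigned edge
  have hGood : ∀ p : I, ∃ a : A, p ∈ R → a ≠ astar ∧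
      ((∃ i, i < ℓ ∧ u i = p ∧ a = c i) ∨
       (¬ C1 p ∧ ∃ q, P.EdgeJoins a p q ∧
          ∃ m, near m q ∧ ∀ n, near n p → m < n)) := by
    intro p
    by_cases hp : p ∈ R
    · by_cases hcp : C1 p
      · obtain ⟨i, hi, hui⟩ := hcp
        exact ⟨c i, fun _ => ⟨hstar i hi, Or.inl ⟨i, hi, hui, rfl⟩⟩⟩
      · have h : ∃ n, near n p := hex p hp
        have hspec := Nat.find_spec h
        have hpos : Nat.find h ≠ 0 := by
          intro hcon
          rw [hcon] at hspec
          exact hcp hspec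
        obtain ⟨k, hk⟩ : ∃ k, Nat.find h = k + 1 := ⟨Nat.find h - 1, by omega⟩
        rw [hk] at hspec
        obtain ⟨q, ⟨a, hane, haj⟩, hq⟩ := hspec
        refine ⟨a, fun _ => ⟨hane, Or.inr ⟨hcp, q, haj, k, hq, ?_⟩⟩⟩
        intro n hn
        have := Nat.find_min' h hn
        omega
    · exact ⟨c 0, fun hcon => absurd hcon hp⟩
  choose φ hφ using hGood
  -- finsets for counting
  have hRfin : R.Finite := Set.toFinite R
  set V : Finset I := hRfin.toFinset with hV
  set EA : Finset A := Finset.univ.filter (fun a => P.fEnd a ∈ R) with hEA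
  have hmemEA : ∀ a : A, a ∈ EA ↔ P.fEnd a ∈ R := by
    intro a; simp [hEA]
  have hsEndR : ∀ a : A, P.fEnd a ∈ R → P.sEnd a ∈ R := by
    intro a ha
    exact hclosed _ _ ha ⟨a, Or.inl ⟨rfl, rfl⟩⟩
  -- Step 1: M injects EA into V
  have step1 : EA.card ≤ V.card := by
    apply Finset.card_le_card_of_injOn M
    · intro a ha
      rw [Finset.mem_coe, hmemEA] at ha
      rw [Finset.mem_coe, hV, Set.Finite.mem_toFinset]
      rcases hMend a with h | h
      · rw [h]; exact ha
      · rw [h]; exact hsEndR a ha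
    · exact hMinj.injOn
  -- endpoints of the chosen edges lie in R, and edges are in EA \ {astar}
  have hφR : ∀ p, p ∈ R → φ p ∈ EA ∧ φ p ≠ astar := by
    intro p hp
    obtain ⟨hne, hg⟩ := hφ p hp
    refine ⟨?_, hne⟩
    rw [hmemEA]
    rcases hg with ⟨i, hi, hui, hci⟩ | ⟨-, q, hj, -⟩
    · have hj := hedge i hi
      rw [← hci] at hj
      rcases hj with ⟨hf, -⟩ | ⟨hf, -⟩
      · rw [hf]; exact hC1R i hi
      · rw [hf]
        exact hC1R _ (Nat.mod_lt _ (by omega))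
    · have hq : q ∈ R := hclosed p q hp ⟨φ p, hj⟩
      rcases hj with ⟨hf, -⟩ | ⟨hf, -⟩
      · rw [hf]; exact hp
      · rw [hf]; exact hq
  have hastarEA : astar ∈ EA := by
    rw [hmemEA]
    rcases hjoin0 with ⟨hf, -⟩ | ⟨hf, -⟩
    · rw [hf]; exact hC2R i0 hi0
    · rw [hf]; exact hC2R _ (Nat.mod_lt _ (by omega))
  -- Step 2: φ injects V into EA.erase astar
  have step2 : V.card ≤ (EA.erase astar).card := by
    apply Finset.card_le_card_of_injOn φ
    · intro p hp
      rw [Finset.mem_coe, hV, Set.Finite.mem_toFinset] at hp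
      obtain ⟨h1, h2⟩ := hφR p hp
      exact Finset.mem_coe.mpr (Finset.mem_erase.mpr ⟨h2, h1⟩)
    · intro p hp p' hp' hpp
      have hp1 : p ∈ R := by simpa [hV, Set.Finite.coe_toFinset, hR] using hp
      have hp1' : p' ∈ R := by simpa [hV, Set.Finite.coe_toFinset, hR] using hp'
      clear hp hp'
      rename' hp1 => hp, hp1' => hp'
      obtain ⟨-, hg⟩ := hφ p hp
      obtain ⟨-, hg'⟩ := hφ p' hp'
      rcases hg with ⟨i, hi, hui, hci⟩ | ⟨hnc, q, hj, m, hmq, hmin⟩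
      · rcases hg' with ⟨i', hi', hui', hci'⟩ | ⟨hnc', q', hj', m', hmq', hmin'⟩
        · rw [hci, hci'] at hpp
          have := hcinj i i' hi hi' hpp
          rw [← hui, ← hui', this]
        · -- φ p' joins p' to q', but φ p' = c i whose endpoints are cycle vertices
          exfalso
          rw [← hpp, hci] at hj'
          have hc1 := hedge i hi
          rcases P.joins_eq hj' hc1 with ⟨hpq, -⟩ | ⟨hpq, -⟩
          · exact hnc' ⟨i, hi, hpq.symm⟩
          · exact hnc' ⟨(i + 1) % ℓ, Nat.mod_lt _ (by omega), hpq.symm⟩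
      · rcases hg' with ⟨i', hi', hui', hci'⟩ | ⟨hnc', q', hj', m', hmq', hmin'⟩
        · exfalso
          rw [hpp, hci'] at hj
          have hc1 := hedge i' hi'
          rcases P.joins_eq hj hc1 with ⟨hpq, -⟩ | ⟨hpq, -⟩
          · exact hnc ⟨i', hi', hpq.symm⟩
          · exact hnc ⟨(i' + 1) % ℓ, Nat.mod_lt _ (by omega), hpq.symm⟩
        · rw [← hpp] at hj'
          rcases P.joins_eq hj hj' with ⟨h1, h2⟩ | ⟨h1, h2⟩
          · exact h1
          · -- cross case: p = q', q = p'
            exfalso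
            rw [h2] at hmq
            rw [← h1] at hmq'
            have hx1 := hmin' m hmq
            have hx2 := hmin m' hmq'
            omega
  -- final contradiction
  have h3 : (EA.erase astar).card = EA.card - 1 := Finset.card_erase_of_mem hastarEA
  have h4 : 1 ≤ EA.card := Finset.card_pos.mpr ⟨astar, hastarEA⟩
  omega

end TwoWPM

end AuxG3

/-- If the fs-relation graph contains a bad subgraph of type `G3`
(two distinct cycles in one connected component), then the instance has no
well-formed matching. -/
theorem no_well_formed_of_badG3
    {A I : Type} [Fintype A] [DecidableEq A] [Fintype I] [DecidableEq I]
    (P : TwoWPM A I) (h : P.HasBadG3) :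
    ¬ P.HasWellFormed := by
  classical
  obtain ⟨ℓ, u, c, ℓ', u', c', hc, hc', hne, hreach⟩ := h
  rintro ⟨M, hMinj, h1, h2, -, -⟩
  have hMend : ∀ a, M a = P.fEnd a ∨ M a = P.sEnd a := by
    intro a
    have ha : a ∈ P.A1 ∪ P.A2 := by rw [P.union_eq]; exact Finset.mem_univ a
    rcases Finset.mem_union.mp ha with h | h
    · have := h1 a h
      simpa [TwoWPM.fEnd, TwoWPM.sEnd, h] using this
    · have hna : a ∉ P.A1 := fun hcon => (Finset.disjoint_left.mp P.disj) hcon h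
      have := h2 a h
      simpa [TwoWPM.fEnd, TwoWPM.sEnd, hna] using this
  simp only [Ne, Set.ext_iff, not_forall, Set.mem_setOf_eq] at hne
  obtain ⟨a0, ha0⟩ := hne
  by_cases hB : ∃ i, i < ℓ' ∧ c' i = a0
  · have hA : ¬ ∃ i, i < ℓ ∧ c i = a0 := fun hA => ha0 ⟨fun _ => hB, fun _ => hA⟩
    obtain ⟨i0, hi0, hci0⟩ := hB
    have hstar : ∀ i, i < ℓ → c i ≠ c' i0 := fun i hi hcon =>
      hA ⟨i, hi, hcon.trans hci0⟩
    exact P.coreG3 M hMinj hMend hc hc' i0 hi0 hstar hreach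
  · by_cases hA : ∃ i, i < ℓ ∧ c i = a0
    · obtain ⟨i0, hi0, hci0⟩ := hA
      have hstar : ∀ i, i < ℓ' → c' i ≠ c i0 := fun i hi hcon =>
        hB ⟨i, hi, hcon.trans hci0⟩
      exact P.coreG3 M hMinj hMend hc' hc i0 hi0 hstar
        (letI : Std.Symm P.Adj := ⟨fun a b h => P.adj_symm h⟩; Std.Symm.symm _ _ hreach)
    · exact ha0 ⟨fun h => absurd h hA, fun h => absurd h hB⟩
end
end

section
/- Suppose n/m → 0 as n → ∞ (with m = m(n) > n). Then for any choice of partition sizes n1(n) + n2(n) = n, the probability that the random fs-relation graph on parameters (n1, n2, m) contains a cycle (a closed walk using ℓ ≥ 2 distinct edges and ℓ distinct vertices) tends to 0 as n → ∞. -/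
open scoped Classical
open Finset

noncomputable section

/-- The sample space of the random fs-relation graph model with `n1` applicants of the
first category, `n2` applicants of the second category, and `m` items: an outcome
records the `f1`-, `s1`-, `f2`- and `s2`-items assigned to the applicants. -/
abbrev FSSpace (n1 n2 m : ℕ) : Type :=
  (Fin n1 → Fin m) × (Fin n1 → Fin m) × (Fin n2 → Fin m) × (Fin n2 → Fin m)

/-- the `f1`-items of an outcome. -/
def fOne {n1 n2 m : ℕ} (ω : FSSpace n1 n2 m) : Fin n1 → Fin m := ω.1
/-- the `s1`-items of an outcome. -/
def sOne {n1 n2 m : ℕ} (ω : FSSpace n1 n2 m) : Fin n1 → Fin m := ω.2.1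
/-- the `f2`-items of an outcome. -/
def fTwo {n1 n2 m : ℕ} (ω : FSSpace n1 n2 m) : Fin n2 → Fin m := ω.2.2.1
/-- the `s2`-items of an outcome. -/
def sTwo {n1 n2 m : ℕ} (ω : FSSpace n1 n2 m) : Fin n2 → Fin m := ω.2.2.2

/-- the set `F1` of an outcome. -/
def FOne {n1 n2 m : ℕ} (ω : FSSpace n1 n2 m) : Finset (Fin m) := Finset.univ.image (fOne ω)
/-- the set `F2` of an outcome. -/
def FTwo {n1 n2 m : ℕ} (ω : FSSpace n1 n2 m) : Finset (Fin m) := Finset.univ.image (fTwo ω)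

/-- an outcome is valid if each `s1`- and `f2`-item avoids `F1` and each `s2`-item
avoids `F1 ∪ F2`, as in the sequential random process. -/
def FSValid {n1 n2 m : ℕ} (ω : FSSpace n1 n2 m) : Prop :=
  (∀ x, sOne ω x ∉ FOne ω) ∧ (∀ y, fTwo ω y ∉ FOne ω) ∧
    (∀ y, sTwo ω y ∉ FOne ω ∪ FTwo ω)

/-- the probability of a single outcome under the sequential random process:
the `f1`-items are independent and uniform on the `m` items, then the `s1`- and
`f2`-items are independent and uniform on the items outside `F1`, then the
`s2`-items are independent and uniform on the items outside `F1 ∪ F2`. -/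
def fsWeight (n1 n2 m : ℕ) (ω : FSSpace n1 n2 m) : ℝ :=
  if FSValid ω then
    (1 / (m : ℝ)) ^ n1 * (1 / ((m : ℝ) - (FOne ω).card)) ^ (n1 + n2) *
      (1 / ((m : ℝ) - ((FOne ω) ∪ (FTwo ω)).card)) ^ n2
  else 0

/-- the probability of an event in the random fs-relation graph model. -/
def fsProb (n1 n2 m : ℕ) (S : FSSpace n1 n2 m → Prop) : ℝ :=
  ∑ ω : FSSpace n1 n2 m, if S ω then fsWeight n1 n2 m ω else 0

/-- the expectation of a random variable in the random fs-relation graph model. -/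
def fsExp (n1 n2 m : ℕ) (f : FSSpace n1 n2 m → ℝ) : ℝ :=
  ∑ ω : FSSpace n1 n2 m, fsWeight n1 n2 m ω * f ω

/-- the index set `T` of tuples `(x1, x2, y1, y2)` with `x1 < x2` and `y1 ≠ y2`. -/
def Ttup (n1 n2 : ℕ) : Finset (Fin n1 × Fin n1 × Fin n2 × Fin n2) :=
  Finset.univ.filter fun v => v.1 < v.2.1 ∧ v.2.2.1 ≠ v.2.2.2

/-- the event `{Z_v = 1}`, i.e. `f1(x1) = f1(x2)`, `f2(y1) = s1(x1)`, `f2(y2) = s1(x2)`. -/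
def ZEvent {n1 n2 m : ℕ} (v : Fin n1 × Fin n1 × Fin n2 × Fin n2)
    (ω : FSSpace n1 n2 m) : Prop :=
  fOne ω v.1 = fOne ω v.2.1 ∧ fTwo ω v.2.2.1 = sOne ω v.1 ∧
    fTwo ω v.2.2.2 = sOne ω v.2.1

/-- the indicator random variable `Z_v`. -/
def Zind {n1 n2 m : ℕ} (v : Fin n1 × Fin n1 × Fin n2 × Fin n2)
    (ω : FSSpace n1 n2 m) : ℝ :=
  if ZEvent v ω then 1 else 0

/-- the random variable `Z = ∑_{v ∈ T} Z_v`. -/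
def Ztotal (n1 n2 m : ℕ) (ω : FSSpace n1 n2 m) : ℝ :=
  ∑ v ∈ Ttup n1 n2, Zind v ω

/-- `T_h(v)`: the tuples `w ∈ T \ {v}` that are `h`-common to `v`,
i.e. `|{x1, x2} ∩ {x1', x2'}| = h`. -/
def Tcommon (n1 n2 : ℕ) (h : ℕ) (v : Fin n1 × Fin n1 × Fin n2 × Fin n2) :
    Finset (Fin n1 × Fin n1 × Fin n2 × Fin n2) :=
  (Ttup n1 n2).filter fun w =>
    w ≠ v ∧ (({v.1, v.2.1} : Finset (Fin n1)) ∩ ({w.1, w.2.1} : Finset (Fin n1))).card = h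

/-- the edge of applicant `a` (first or second category) joins items `p` and `q`
in the fs-relation graph of the outcome `ω`. -/
def fsJoins {n1 n2 m : ℕ} (ω : FSSpace n1 n2 m) (a : Fin n1 ⊕ Fin n2)
    (p q : Fin m) : Prop :=
  Sum.elim (fun x => (fOne ω x = p ∧ sOne ω x = q) ∨ (fOne ω x = q ∧ sOne ω x = p))
    (fun y => (fTwo ω y = p ∧ sTwo ω y = q) ∨ (fTwo ω y = q ∧ sTwo ω y = p)) a

/-- the fs-relation graph of the outcome contains a cycle: a closed walk on `ℓ ≥ 2`
distinct vertices using `ℓ` distinct edges. -/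
def fsHasCycle {n1 n2 m : ℕ} (ω : FSSpace n1 n2 m) : Prop :=
  ∃ (ℓ : ℕ) (u : ℕ → Fin m) (c : ℕ → Fin n1 ⊕ Fin n2),
    2 ≤ ℓ ∧
    (∀ i j, i < ℓ → j < ℓ → u i = u j → i = j) ∧
    (∀ i j, i < ℓ → j < ℓ → c i = c j → i = j) ∧
    (∀ i, i < ℓ → fsJoins ω (c i) (u i) (u ((i + 1) % ℓ)))

/-- the fs-relation graph of the outcome contains a simple path with `ℓ ≥ 4`
distinct edges and `ℓ + 1` distinct vertices. -/
def fsHasLongPath {n1 n2 m : ℕ} (ω : FSSpace n1 n2 m) : Prop :=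
  ∃ (ℓ : ℕ) (v : ℕ → Fin m) (e : ℕ → Fin n1 ⊕ Fin n2),
    4 ≤ ℓ ∧
    (∀ i j, i ≤ ℓ → j ≤ ℓ → v i = v j → i = j) ∧
    (∀ i j, i < ℓ → j < ℓ → e i = e j → i = j) ∧
    (∀ i, i < ℓ → fsJoins ω (e i) (v i) (v (i + 1)))

/-- the cyclic successor on `Fin ℓ`. -/
def fsNext {ℓ : ℕ} (i : Fin ℓ) : Fin ℓ := ⟨(i.val + 1) % ℓ, Nat.mod_lt _ i.pos⟩

section FSAux

variable {n1 n2 m : ℕ}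

lemma FOne_card_le (ω : FSSpace n1 n2 m) : (FOne ω).card ≤ n1 := by
  classical
  calc (FOne ω).card ≤ (Finset.univ : Finset (Fin n1)).card := Finset.card_image_le
    _ = n1 := by simp

lemma FTwo_card_le (ω : FSSpace n1 n2 m) : (FTwo ω).card ≤ n2 := by
  classical
  calc (FTwo ω).card ≤ (Finset.univ : Finset (Fin n2)).card := Finset.card_image_le
    _ = n2 := by simp

lemma fsWeight_nonneg (hmn : n1 + n2 < m) (ω : FSSpace n1 n2 m) :
    0 ≤ fsWeight n1 n2 m ω := by
  unfold fsWeight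
  split
  · have h1 : ((FOne ω).card : ℝ) ≤ (m : ℝ) := by
      have := FOne_card_le ω; exact_mod_cast le_trans this (by omega)
    have h2 : (((FOne ω) ∪ (FTwo ω)).card : ℝ) ≤ (m : ℝ) := by
      have hu : ((FOne ω) ∪ (FTwo ω)).card ≤ m := by
        have := Finset.card_union_le (FOne ω) (FTwo ω)
        have := FOne_card_le ω
        have := FTwo_card_le ω
        omega
      exact_mod_cast hu
    have hm0 : (0:ℝ) ≤ 1 / (m : ℝ) := by positivity
    refine mul_nonneg (mul_nonneg (pow_nonneg hm0 _) (pow_nonneg ?_ _)) (pow_nonneg ?_ _)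
    · rw [one_div]; exact inv_nonneg.mpr (by linarith)
    · rw [one_div]; exact inv_nonneg.mpr (by linarith)
  · exact le_refl 0

lemma fsProb_nonneg (hmn : n1 + n2 < m) (S : FSSpace n1 n2 m → Prop) :
    0 ≤ fsProb n1 n2 m S := by
  unfold fsProb
  refine Finset.sum_nonneg fun ω _ => ?_
  split
  · exact fsWeight_nonneg hmn ω
  · exact le_refl 0

lemma fsProb_mono (hmn : n1 + n2 < m) {S T : FSSpace n1 n2 m → Prop}
    (h : ∀ ω, S ω → T ω) : fsProb n1 n2 m S ≤ fsProb n1 n2 m T := by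
  unfold fsProb
  refine Finset.sum_le_sum fun ω _ => ?_
  by_cases hS : S ω
  · rw [if_pos hS, if_pos (h ω hS)]
  · rw [if_neg hS]
    split
    · exact fsWeight_nonneg hmn ω
    · exact le_refl 0

lemma fsProb_union {ι : Type*} (hmn : n1 + n2 < m) (V : Finset ι)
    (T : ι → FSSpace n1 n2 m → Prop) :
    fsProb n1 n2 m (fun ω => ∃ v ∈ V, T v ω) ≤ ∑ v ∈ V, fsProb n1 n2 m (T v) := by
  unfold fsProb
  rw [Finset.sum_comm]
  refine Finset.sum_le_sum fun ω _ => ?_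
  by_cases h : ∃ v ∈ V, T v ω
  · rw [if_pos h]
    obtain ⟨v0, hv0, hT⟩ := h
    calc fsWeight n1 n2 m ω = (if T v0 ω then fsWeight n1 n2 m ω else 0) := (if_pos hT).symm
      _ ≤ ∑ v ∈ V, (if T v ω then fsWeight n1 n2 m ω else 0) := by
          refine Finset.single_le_sum
            (f := fun v => if T v ω then fsWeight n1 n2 m ω else 0) (fun v _ => ?_) hv0
          split
          · exact fsWeight_nonneg hmn ω
          · exact le_refl 0
  · rw [if_neg h]
    refine Finset.sum_nonneg fun v _ => ?_
    split
    · exact fsWeight_nonneg hmn ω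
    · exact le_refl 0

lemma sum_pi_indicator {k : ℕ} (S : Fin k → Finset (Fin m)) (c : ℝ) :
    ∑ g : Fin k → Fin m, (if ∀ i, g i ∈ S i then c ^ k else 0)
      = ∏ i, ((S i).card * c) := by
  classical
  have h1 : ∀ g : Fin k → Fin m,
      (if ∀ i, g i ∈ S i then c ^ k else 0) = ∏ i, (if g i ∈ S i then c else 0) := by
    intro g
    by_cases h : ∀ i, g i ∈ S i
    · rw [if_pos h, Finset.prod_congr rfl fun i _ => if_pos (h i)]
      simp
    · rw [if_neg h]
      push_neg at h
      obtain ⟨i, hi⟩ := h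
      have hz : (if g i ∈ S i then c else 0) = 0 := if_neg hi
      exact (Finset.prod_eq_zero (Finset.mem_univ i) hz).symm
  simp_rw [h1]
  rw [← Fintype.piFinset_univ,
    ← Finset.prod_univ_sum (fun _ : Fin k => (Finset.univ : Finset (Fin m)))
      (fun i b => if b ∈ S i then c else 0)]
  refine Finset.prod_congr rfl fun i _ => ?_
  rw [Finset.sum_ite_mem, Finset.univ_inter, Finset.sum_const, nsmul_eq_mul]

/-- Key decoupled bound. -/
lemma fs_decoupled_bound (hmn : n1 + n2 < m)
    (A B : Fin n1 → Finset (Fin m)) (C D : Fin n2 → Finset (Fin m)) :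
    fsProb n1 n2 m (fun ω =>
        (∀ x, fOne ω x ∈ A x ∧ sOne ω x ∈ B x) ∧
        (∀ y, fTwo ω y ∈ C y ∧ sTwo ω y ∈ D y))
      ≤ (∏ x, ((A x).card / (m : ℝ) *
            min 1 ((B x).card / ((m : ℝ) - ((n1 + n2 : ℕ) : ℝ)))))
        * ∏ y, (min 1 ((C y).card / ((m : ℝ) - ((n1 + n2 : ℕ) : ℝ))) *
            min 1 ((D y).card / ((m : ℝ) - ((n1 + n2 : ℕ) : ℝ)))) := by
  classical
  set Ev : FSSpace n1 n2 m → Prop := fun ω =>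
    (∀ x, fOne ω x ∈ A x ∧ sOne ω x ∈ B x) ∧
    (∀ y, fTwo ω y ∈ C y ∧ sTwo ω y ∈ D y) with hEv
  set μ : ℝ := (m : ℝ) - ((n1 + n2 : ℕ) : ℝ) with hμdef
  have hμ : 0 < μ := by
    rw [hμdef]
    have : ((n1 + n2 : ℕ) : ℝ) < (m : ℝ) := by exact_mod_cast hmn
    linarith
  -- the stage lemma
  have stage : ∀ (k e : ℕ), e ≤ n1 + n2 → ∀ (S T : Fin k → Finset (Fin m)),
      (∀ i, S i ⊆ T i) → (∀ i, (S i).card + e ≤ m) →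
      ∑ g : Fin k → Fin m, (if ∀ i, g i ∈ S i then (1 / ((m : ℝ) - e)) ^ k else 0)
        ≤ ∏ i, min 1 ((T i).card / μ) := by
    intro k e he S T hST hSe
    have hme : (0:ℝ) < (m : ℝ) - e := by
      have : (e : ℝ) ≤ ((n1+n2 : ℕ) : ℝ) := by exact_mod_cast he
      linarith
    have hμe : μ ≤ (m : ℝ) - e := by
      have : (e : ℝ) ≤ ((n1+n2 : ℕ) : ℝ) := by exact_mod_cast he
      rw [hμdef]; linarith
    rw [sum_pi_indicator]
    refine Finset.prod_le_prod (fun i _ => ?_) (fun i _ => ?_)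
    · exact mul_nonneg (Nat.cast_nonneg _) (by positivity)
    · refine le_min ?_ ?_
      · rw [mul_one_div, div_le_one hme]
        have : ((S i).card : ℝ) + (e : ℝ) ≤ (m : ℝ) := by exact_mod_cast hSe i
        linarith
      · rw [mul_one_div]
        refine div_le_div₀ (Nat.cast_nonneg _) ?_ hμ hμe
        exact_mod_cast Finset.card_le_card (hST i)
  -- notation for the four factors
  set tA : (Fin n1 → Fin m) → ℝ :=
    fun f1 => if ∀ x, f1 x ∈ A x then (1 / (m : ℝ)) ^ n1 else 0 with htA
  set tB : (Fin n1 → Fin m) → (Fin n1 → Fin m) → ℝ :=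
    fun f1 s1 => if ∀ x, s1 x ∈ B x \ Finset.univ.image f1 then
      (1 / ((m : ℝ) - (Finset.univ.image f1).card)) ^ n1 else 0 with htB
  set tC : (Fin n1 → Fin m) → (Fin n2 → Fin m) → ℝ :=
    fun f1 f2 => if ∀ y, f2 y ∈ C y \ Finset.univ.image f1 then
      (1 / ((m : ℝ) - (Finset.univ.image f1).card)) ^ n2 else 0 with htC
  set tD : (Fin n1 → Fin m) → (Fin n2 → Fin m) → (Fin n2 → Fin m) → ℝ :=
    fun f1 f2 s2 => if ∀ y, s2 y ∈ D y \ (Finset.univ.image f1 ∪ Finset.univ.image f2) then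
      (1 / ((m : ℝ) - ((Finset.univ.image f1 ∪ Finset.univ.image f2)).card)) ^ n2 else 0 with htD
  have hF1le : ∀ f1 : Fin n1 → Fin m, ((Finset.univ.image f1 : Finset (Fin m))).card ≤ n1 := by
    intro f1
    calc (Finset.univ.image f1).card ≤ (Finset.univ : Finset (Fin n1)).card :=
          Finset.card_image_le
      _ = n1 := by simp
  have hF1pos : ∀ f1 : Fin n1 → Fin m, (0:ℝ) < (m : ℝ) - (Finset.univ.image f1).card := by
    intro f1
    have h1 : ((Finset.univ.image f1).card : ℝ) ≤ (n1 : ℝ) := by exact_mod_cast hF1le f1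
    have h2 : ((n1 + n2 : ℕ) : ℝ) < (m:ℝ) := by exact_mod_cast hmn
    have h3 : (n1 : ℝ) ≤ ((n1+n2 : ℕ) : ℝ) := by exact_mod_cast Nat.le_add_right n1 n2
    linarith
  have hUle : ∀ (f1 : Fin n1 → Fin m) (f2 : Fin n2 → Fin m),
      ((Finset.univ.image f1 ∪ Finset.univ.image f2 : Finset (Fin m))).card ≤ n1 + n2 := by
    intro f1 f2
    have h1 := Finset.card_union_le (Finset.univ.image f1) (Finset.univ.image f2)
    have h2 := hF1le f1
    have h3 : ((Finset.univ.image f2 : Finset (Fin m))).card ≤ n2 := by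
      calc (Finset.univ.image f2).card ≤ (Finset.univ : Finset (Fin n2)).card :=
            Finset.card_image_le
        _ = n2 := by simp
    omega
  have hUpos : ∀ (f1 : Fin n1 → Fin m) (f2 : Fin n2 → Fin m),
      (0:ℝ) < (m : ℝ) - ((Finset.univ.image f1 ∪ Finset.univ.image f2 : Finset (Fin m))).card := by
    intro f1 f2
    have h1 : (((Finset.univ.image f1 ∪ Finset.univ.image f2 : Finset (Fin m))).card : ℝ)
        ≤ ((n1 + n2 : ℕ) : ℝ) := by exact_mod_cast hUle f1 f2
    have h2 : ((n1 + n2 : ℕ) : ℝ) < (m:ℝ) := by exact_mod_cast hmn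
    linarith
  have htAnn : ∀ f1, 0 ≤ tA f1 := by
    intro f1; simp only [htA]; split
    · positivity
    · exact le_refl 0
  have htBnn : ∀ f1 s1, 0 ≤ tB f1 s1 := by
    intro f1 s1; simp only [htB]; split
    · have := hF1pos f1; positivity
    · exact le_refl 0
  have htCnn : ∀ f1 f2, 0 ≤ tC f1 f2 := by
    intro f1 f2; simp only [htC]; split
    · have := hF1pos f1; positivity
    · exact le_refl 0
  -- bound for each stage sum
  set PB : ℝ := ∏ x, min 1 ((B x).card / μ) with hPB
  set PC : ℝ := ∏ y, min 1 ((C y).card / μ) with hPC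
  set PD : ℝ := ∏ y, min 1 ((D y).card / μ) with hPD
  have hPBnn : 0 ≤ PB := Finset.prod_nonneg fun x _ => le_min zero_le_one (by positivity)
  have hPCnn : 0 ≤ PC := Finset.prod_nonneg fun y _ => le_min zero_le_one (by positivity)
  have hPDnn : 0 ≤ PD := Finset.prod_nonneg fun y _ => le_min zero_le_one (by positivity)
  have hcard_aux : ∀ (s t : Finset (Fin m)), (s \ t).card + t.card ≤ m := by
    intro s t
    rw [Finset.card_sdiff_add_card]
    calc (s ∪ t).card ≤ Fintype.card (Fin m) := Finset.card_le_univ _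
      _ = m := Fintype.card_fin m
  have hD : ∀ f1 f2, ∑ s2 : Fin n2 → Fin m, tD f1 f2 s2 ≤ PD := by
    intro f1 f2
    simp only [htD, hPD]
    exact stage n2 _ (hUle f1 f2) _ D (fun y => Finset.sdiff_subset)
      (fun y => hcard_aux _ _)
  have hC : ∀ f1, ∑ f2 : Fin n2 → Fin m, tC f1 f2 ≤ PC := by
    intro f1
    simp only [htC, hPC]
    exact stage n2 _ (le_trans (hF1le f1) (Nat.le_add_right _ _)) _ C
      (fun y => Finset.sdiff_subset) (fun y => hcard_aux _ _)
  have hB : ∀ f1, ∑ s1 : Fin n1 → Fin m, tB f1 s1 ≤ PB := by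
    intro f1
    simp only [htB, hPB]
    exact stage n1 _ (le_trans (hF1le f1) (Nat.le_add_right _ _)) _ B
      (fun x => Finset.sdiff_subset) (fun x => hcard_aux _ _)
  have hA : ∑ f1 : Fin n1 → Fin m, tA f1 = ∏ x, ((A x).card * (1 / (m:ℝ))) := by
    simp only [htA]
    exact sum_pi_indicator A (1 / (m:ℝ))
  -- pointwise bound
  have hpt : ∀ (f1 s1 : Fin n1 → Fin m) (f2 s2 : Fin n2 → Fin m),
      (if Ev (f1, s1, f2, s2)
        then fsWeight n1 n2 m (f1, s1, f2, s2) else 0)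
      ≤ tA f1 * (tB f1 s1 * (tC f1 f2 * tD f1 f2 s2)) := by
    intro f1 s1 f2 s2
    have hRHSnn : 0 ≤ tA f1 * (tB f1 s1 * (tC f1 f2 * tD f1 f2 s2)) := by
      refine mul_nonneg (htAnn f1) (mul_nonneg (htBnn f1 s1) (mul_nonneg (htCnn f1 f2) ?_))
      simp only [htD]; split
      · have := hUpos f1 f2; positivity
      · exact le_refl 0
    by_cases hE0 : Ev (f1, s1, f2, s2)
    · rw [if_pos hE0]
      have hE : ((∀ x, f1 x ∈ A x ∧ s1 x ∈ B x) ∧ (∀ y, f2 y ∈ C y ∧ s2 y ∈ D y)) := hE0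
      by_cases hV : FSValid (f1, s1, f2, s2)
      · -- equality case
        have hFOne : FOne (f1, s1, f2, s2) = Finset.univ.image f1 := rfl
        have hFTwo : FTwo (f1, s1, f2, s2) = Finset.univ.image f2 := rfl
        have hV1 := hV.1
        have hV2 := hV.2.1
        have hV3 := hV.2.2
        have cA : ∀ x, f1 x ∈ A x := fun x => (hE.1 x).1
        have cB : ∀ x, s1 x ∈ B x \ Finset.univ.image f1 := fun x =>
          Finset.mem_sdiff.mpr ⟨(hE.1 x).2, hV1 x⟩
        have cC : ∀ y, f2 y ∈ C y \ Finset.univ.image f1 := fun y =>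
          Finset.mem_sdiff.mpr ⟨(hE.2 y).1, hV2 y⟩
        have cD : ∀ y, s2 y ∈ D y \ (Finset.univ.image f1 ∪ Finset.univ.image f2) := fun y =>
          Finset.mem_sdiff.mpr ⟨(hE.2 y).2, hV3 y⟩
        rw [fsWeight, if_pos hV]
        simp only [htA, htB, htC, htD]
        rw [if_pos cA, if_pos cB, if_pos cC, if_pos cD, hFOne, hFTwo, pow_add]
        exact le_of_eq (by ring)
      · rw [fsWeight, if_neg hV]
        exact hRHSnn
    · rw [if_neg hE0]
      exact hRHSnn
  -- assemble
  have hsum : fsProb n1 n2 m Ev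
      = ∑ f1 : Fin n1 → Fin m, ∑ s1 : Fin n1 → Fin m, ∑ f2 : Fin n2 → Fin m,
          ∑ s2 : Fin n2 → Fin m,
          (if Ev (f1, s1, f2, s2)
            then fsWeight n1 n2 m (f1, s1, f2, s2) else 0) := by
    unfold fsProb
    rw [Fintype.sum_prod_type]
    refine Finset.sum_congr rfl fun f1 _ => ?_
    rw [Fintype.sum_prod_type]
    refine Finset.sum_congr rfl fun s1 _ => ?_
    rw [Fintype.sum_prod_type]
    refine Finset.sum_congr rfl fun f2 _ => Finset.sum_congr rfl fun s2 _ => ?_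
    congr 1
  calc fsProb n1 n2 m Ev
      = ∑ f1 : Fin n1 → Fin m, ∑ s1 : Fin n1 → Fin m, ∑ f2 : Fin n2 → Fin m,
          ∑ s2 : Fin n2 → Fin m,
          (if Ev (f1, s1, f2, s2)
            then fsWeight n1 n2 m (f1, s1, f2, s2) else 0) := hsum
    _ ≤ ∑ f1 : Fin n1 → Fin m, ∑ s1 : Fin n1 → Fin m, ∑ f2 : Fin n2 → Fin m,
          ∑ s2 : Fin n2 → Fin m, tA f1 * (tB f1 s1 * (tC f1 f2 * tD f1 f2 s2)) := by
        refine Finset.sum_le_sum fun f1 _ => Finset.sum_le_sum fun s1 _ =>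
          Finset.sum_le_sum fun f2 _ => Finset.sum_le_sum fun s2 _ => hpt f1 s1 f2 s2
    _ = ∑ f1 : Fin n1 → Fin m, tA f1 * ∑ s1 : Fin n1 → Fin m, tB f1 s1 *
          ∑ f2 : Fin n2 → Fin m, tC f1 f2 * ∑ s2 : Fin n2 → Fin m, tD f1 f2 s2 := by
        simp_rw [← Finset.mul_sum]
    _ ≤ ∑ f1 : Fin n1 → Fin m, tA f1 * (PB * (PC * PD)) := by
        refine Finset.sum_le_sum fun f1 _ => ?_
        refine mul_le_mul_of_nonneg_left ?_ (htAnn f1)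
        calc ∑ s1 : Fin n1 → Fin m, tB f1 s1 *
              ∑ f2 : Fin n2 → Fin m, tC f1 f2 * ∑ s2 : Fin n2 → Fin m, tD f1 f2 s2
            ≤ ∑ s1 : Fin n1 → Fin m, tB f1 s1 * (PC * PD) := by
              refine Finset.sum_le_sum fun s1 _ => ?_
              refine mul_le_mul_of_nonneg_left ?_ (htBnn f1 s1)
              calc ∑ f2 : Fin n2 → Fin m, tC f1 f2 * ∑ s2 : Fin n2 → Fin m, tD f1 f2 s2
                  ≤ ∑ f2 : Fin n2 → Fin m, tC f1 f2 * PD := by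
                    refine Finset.sum_le_sum fun f2 _ => ?_
                    exact mul_le_mul_of_nonneg_left (hD f1 f2) (htCnn f1 f2)
                _ = (∑ f2 : Fin n2 → Fin m, tC f1 f2) * PD := by
                    rw [Finset.sum_mul]
                _ ≤ PC * PD := mul_le_mul_of_nonneg_right (hC f1) hPDnn
          _ = (∑ s1 : Fin n1 → Fin m, tB f1 s1) * (PC * PD) := by rw [Finset.sum_mul]
          _ ≤ PB * (PC * PD) := mul_le_mul_of_nonneg_right (hB f1)
              (mul_nonneg hPCnn hPDnn)
    _ = (∑ f1 : Fin n1 → Fin m, tA f1) * (PB * (PC * PD)) := by rw [Finset.sum_mul]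
    _ = (∏ x, ((A x).card * (1 / (m:ℝ)))) * (PB * (PC * PD)) := by rw [hA]
    _ = (∏ x, ((A x).card / (m : ℝ) * min 1 ((B x).card / μ)))
        * ∏ y, (min 1 ((C y).card / μ) * min 1 ((D y).card / μ)) := by
        have h1 : (∏ x, ((A x).card / (m : ℝ) * min 1 ((B x).card / μ)))
            = (∏ x, ((A x).card * (1 / (m:ℝ)))) * PB := by
          rw [hPB, ← Finset.prod_mul_distrib]
          exact Finset.prod_congr rfl fun x _ => by rw [mul_one_div]
        have h2 : (∏ y, (min 1 ((C y).card / μ) * min 1 ((D y).card / μ))) = PC * PD := by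
          rw [hPC, hPD, ← Finset.prod_mul_distrib]
        rw [h1, h2]
        ring



lemma fs_spec_bound (hmn : n1 + n2 < m) (ℓ : ℕ)
    (u' : Fin ℓ → Fin m) (c' : Fin ℓ → (Fin n1 ⊕ Fin n2)) :
    fsProb n1 n2 m (fun ω => Function.Injective c' ∧
        ∀ i, fsJoins ω (c' i) (u' i) (u' (fsNext i)))
      ≤ (4 / ((m : ℝ) - ((n1 + n2 : ℕ) : ℝ)) ^ 2) ^ ℓ := by
  classical
  have hμ : (0:ℝ) < (m : ℝ) - ((n1 + n2 : ℕ) : ℝ) := by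
    have : ((n1 + n2 : ℕ) : ℝ) < (m : ℝ) := by exact_mod_cast hmn
    linarith
  set μ : ℝ := (m : ℝ) - ((n1 + n2 : ℕ) : ℝ) with hμdef
  have hm0 : (0:ℝ) < (m:ℝ) := by
    have : (0:ℕ) < m := by omega
    exact_mod_cast this
  have hμm : μ ≤ (m:ℝ) := by
    rw [hμdef]
    have : (0:ℝ) ≤ ((n1+n2 : ℕ) : ℝ) := Nat.cast_nonneg _
    linarith
  by_cases hinj : Function.Injective c'
  case neg =>
    have hzero : fsProb n1 n2 m (fun ω => Function.Injective c' ∧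
        ∀ i, fsJoins ω (c' i) (u' i) (u' (fsNext i))) = 0 := by
      unfold fsProb
      exact Finset.sum_eq_zero fun ω _ => if_neg (fun h => hinj h.1)
    rw [hzero]
    positivity
  case pos =>
  set A : Fin n1 → Finset (Fin m) := fun x =>
    if h : ∃ i, c' i = Sum.inl x then {u' h.choose, u' (fsNext h.choose)} else Finset.univ
    with hAdef
  set C : Fin n2 → Finset (Fin m) := fun y =>
    if h : ∃ i, c' i = Sum.inr y then {u' h.choose, u' (fsNext h.choose)} else Finset.univ
    with hCdef
  have step1 : fsProb n1 n2 m (fun ω => Function.Injective c' ∧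
        ∀ i, fsJoins ω (c' i) (u' i) (u' (fsNext i)))
      ≤ fsProb n1 n2 m (fun ω =>
        (∀ x, fOne ω x ∈ A x ∧ sOne ω x ∈ A x) ∧
        (∀ y, fTwo ω y ∈ C y ∧ sTwo ω y ∈ C y)) := by
    refine fsProb_mono hmn ?_
    rintro ω ⟨-, hJ⟩
    constructor
    · intro x
      by_cases h : ∃ i, c' i = Sum.inl x
      · have hA : A x = {u' h.choose, u' (fsNext h.choose)} := by
          simp only [hAdef]; rw [dif_pos h]
        have hj := hJ h.choose
        rw [h.choose_spec] at hj
        simp only [fsJoins, Sum.elim_inl] at hj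
        rw [hA]
        rcases hj with ⟨h1, h2⟩ | ⟨h1, h2⟩ <;>
          simp [h1, h2, Finset.mem_insert, Finset.mem_singleton]
      · have hA : A x = Finset.univ := by
          simp only [hAdef]; rw [dif_neg h]
        rw [hA]
        exact ⟨Finset.mem_univ _, Finset.mem_univ _⟩
    · intro y
      by_cases h : ∃ i, c' i = Sum.inr y
      · have hC : C y = {u' h.choose, u' (fsNext h.choose)} := by
          simp only [hCdef]; rw [dif_pos h]
        have hj := hJ h.choose
        rw [h.choose_spec] at hj
        simp only [fsJoins, Sum.elim_inr] at hj
        rw [hC]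
        rcases hj with ⟨h1, h2⟩ | ⟨h1, h2⟩ <;>
          simp [h1, h2, Finset.mem_insert, Finset.mem_singleton]
      · have hC : C y = Finset.univ := by
          simp only [hCdef]; rw [dif_neg h]
        rw [hC]
        exact ⟨Finset.mem_univ _, Finset.mem_univ _⟩
  have step2 := fs_decoupled_bound hmn A A C C
  set φ : (Fin n1 ⊕ Fin n2) → ℝ := Sum.elim
    (fun x => (A x).card / (m : ℝ) * min 1 ((A x).card / μ))
    (fun y => min 1 ((C y).card / μ) * min 1 ((C y).card / μ)) with hφdef
  have hφnn : ∀ a, 0 ≤ φ a := by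
    intro a
    rcases a with x | y <;> simp only [hφdef, Sum.elim_inl, Sum.elim_inr]
    · exact mul_nonneg (div_nonneg (Nat.cast_nonneg _) hm0.le)
        (le_min zero_le_one (div_nonneg (Nat.cast_nonneg _) hμ.le))
    · exact mul_nonneg (le_min zero_le_one (div_nonneg (Nat.cast_nonneg _) hμ.le))
        (le_min zero_le_one (div_nonneg (Nat.cast_nonneg _) hμ.le))
  have hcard_le_m : ∀ S : Finset (Fin m), (S.card : ℝ) ≤ (m : ℝ) := by
    intro S
    have hS : S.card ≤ m := by
      calc S.card ≤ Fintype.card (Fin m) := Finset.card_le_univ _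
        _ = m := Fintype.card_fin m
    exact_mod_cast hS
  have hφ1 : ∀ a, φ a ≤ 1 := by
    intro a
    rcases a with x | y <;> simp only [hφdef, Sum.elim_inl, Sum.elim_inr]
    · refine mul_le_one₀ ?_
        (le_min zero_le_one (div_nonneg (Nat.cast_nonneg _) hμ.le)) (min_le_left _ _)
      rw [div_le_one hm0]
      exact hcard_le_m _
    · exact mul_le_one₀ (min_le_left _ _)
        (le_min zero_le_one (div_nonneg (Nat.cast_nonneg _) hμ.le)) (min_le_left _ _)
  have hpair : ∀ (p q : Fin m), (({p, q} : Finset (Fin m)).card : ℝ) ≤ 2 := by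
    intro p q
    have h2 : ({p, q} : Finset (Fin m)).card ≤ 2 := by
      simpa using Finset.card_insert_le p ({q} : Finset (Fin m))
    exact_mod_cast h2
  have hmulval : (2/μ) * (2/μ) = 4 / μ ^ 2 := by
    rw [div_mul_div_comm, pow_two]
    norm_num
  have hbound2 : ∀ S : Finset (Fin m), (S.card : ℝ) ≤ 2 →
      (S.card : ℝ) / (m:ℝ) * min 1 ((S.card : ℝ) / μ) ≤ 4 / μ ^ 2 := by
    intro S hS
    have h1 : (S.card : ℝ) / (m:ℝ) ≤ 2 / μ := div_le_div₀ (by norm_num) hS hμ hμm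
    have h2 : min 1 ((S.card : ℝ) / μ) ≤ 2 / μ :=
      le_trans (min_le_right _ _) (div_le_div₀ (by norm_num) hS hμ le_rfl)
    calc (S.card : ℝ) / (m:ℝ) * min 1 ((S.card : ℝ) / μ)
        ≤ (2/μ) * (2/μ) := by
          refine mul_le_mul h1 h2
            (le_min zero_le_one (div_nonneg (Nat.cast_nonneg _) hμ.le))
            (div_nonneg (by norm_num) hμ.le)
      _ = 4 / μ ^ 2 := hmulval
  have hbound2' : ∀ S : Finset (Fin m), (S.card : ℝ) ≤ 2 →
      min 1 ((S.card : ℝ) / μ) * min 1 ((S.card : ℝ) / μ) ≤ 4 / μ ^ 2 := by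
    intro S hS
    have h2 : min 1 ((S.card : ℝ) / μ) ≤ 2 / μ :=
      le_trans (min_le_right _ _) (div_le_div₀ (by norm_num) hS hμ le_rfl)
    calc min 1 ((S.card : ℝ) / μ) * min 1 ((S.card : ℝ) / μ)
        ≤ (2/μ) * (2/μ) := by
          refine mul_le_mul h2 h2
            (le_min zero_le_one (div_nonneg (Nat.cast_nonneg _) hμ.le))
            (div_nonneg (by norm_num) hμ.le)
      _ = 4 / μ ^ 2 := hmulval
  have hφc : ∀ i, φ (c' i) ≤ 4 / μ ^ 2 := by
    intro i
    rcases hc : c' i with x | y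
    · have h : ∃ j, c' j = Sum.inl x := ⟨i, hc⟩
      have hA : A x = {u' h.choose, u' (fsNext h.choose)} := by
        simp only [hAdef]; rw [dif_pos h]
      simp only [hφdef, Sum.elim_inl]
      rw [hA]
      exact hbound2 _ (hpair _ _)
    · have h : ∃ j, c' j = Sum.inr y := ⟨i, hc⟩
      have hC : C y = {u' h.choose, u' (fsNext h.choose)} := by
        simp only [hCdef]; rw [dif_pos h]
      simp only [hφdef, Sum.elim_inr]
      rw [hC]
      exact hbound2' _ (hpair _ _)
  calc fsProb n1 n2 m (fun ω => Function.Injective c' ∧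
        ∀ i, fsJoins ω (c' i) (u' i) (u' (fsNext i)))
      ≤ fsProb n1 n2 m (fun ω =>
        (∀ x, fOne ω x ∈ A x ∧ sOne ω x ∈ A x) ∧
        (∀ y, fTwo ω y ∈ C y ∧ sTwo ω y ∈ C y)) := step1
    _ ≤ (∏ x, ((A x).card / (m : ℝ) * min 1 ((A x).card / μ)))
        * ∏ y, (min 1 ((C y).card / μ) * min 1 ((C y).card / μ)) := step2
    _ = ∏ a : Fin n1 ⊕ Fin n2, φ a := by
        rw [Fintype.prod_sum_type]
        simp only [hφdef, Sum.elim_inl, Sum.elim_inr]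
    _ = (∏ a ∈ Finset.univ.image c', φ a) * ∏ a ∈ (Finset.univ.image c')ᶜ, φ a := by
        rw [Finset.prod_mul_prod_compl]
    _ ≤ (∏ a ∈ Finset.univ.image c', φ a) * 1 := by
        refine mul_le_mul_of_nonneg_left ?_ (Finset.prod_nonneg fun a _ => hφnn a)
        exact Finset.prod_le_one (fun a _ => hφnn a) (fun a _ => hφ1 a)
    _ = ∏ a ∈ Finset.univ.image c', φ a := mul_one _
    _ = ∏ i : Fin ℓ, φ (c' i) := Finset.prod_image fun i _ j _ h => hinj h
    _ ≤ ∏ _i : Fin ℓ, (4 / μ ^ 2) :=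
        Finset.prod_le_prod (fun i _ => hφnn _) (fun i _ => hφc i)
    _ = (4 / μ ^ 2) ^ ℓ := by
        rw [Finset.prod_const, Finset.card_univ, Fintype.card_fin]

lemma fs_cycle_bound (hmn : n1 + n2 < m) :
    fsProb n1 n2 m fsHasCycle ≤ ∑ ℓ ∈ Finset.Icc 2 (n1 + n2),
      (((n1 + n2 : ℕ) : ℝ) * (m : ℝ) * (4 / ((m : ℝ) - ((n1 + n2 : ℕ) : ℝ)) ^ 2)) ^ ℓ := by
  classical
  -- reduction to finite specs
  have hred : fsProb n1 n2 m fsHasCycle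
      ≤ fsProb n1 n2 m (fun ω => ∃ ℓ ∈ Finset.Icc 2 (n1 + n2),
          ∃ p ∈ (Finset.univ : Finset ((Fin ℓ → Fin m) × (Fin ℓ → (Fin n1 ⊕ Fin n2)))),
            Function.Injective p.2 ∧ ∀ i, fsJoins ω (p.2 i) (p.1 i) (p.1 (fsNext i))) := by
    refine fsProb_mono hmn ?_
    rintro ω ⟨ℓ, u, c, h2, hu, hc, hJ⟩
    have hinj : Function.Injective (fun i : Fin ℓ => c i.val) := by
      intro i j hij
      exact Fin.ext (hc _ _ i.isLt j.isLt hij)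
    have hcard : ℓ ≤ n1 + n2 := by
      have := Fintype.card_le_of_injective _ hinj
      simpa [Fintype.card_sum] using this
    refine ⟨ℓ, Finset.mem_Icc.mpr ⟨h2, hcard⟩,
      (fun i : Fin ℓ => u i.val, fun i : Fin ℓ => c i.val), Finset.mem_univ _, hinj, ?_⟩
    intro i
    exact hJ i.val i.isLt
  have hub1 := fsProb_union hmn (Finset.Icc 2 (n1 + n2))
    (fun ℓ ω => ∃ p ∈ (Finset.univ : Finset ((Fin ℓ → Fin m) × (Fin ℓ → (Fin n1 ⊕ Fin n2)))),
      Function.Injective p.2 ∧ ∀ i, fsJoins ω (p.2 i) (p.1 i) (p.1 (fsNext i)))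
  refine le_trans (le_trans hred hub1) ?_
  refine Finset.sum_le_sum fun ℓ hℓ => ?_
  have hub2 := fsProb_union hmn
    (Finset.univ : Finset ((Fin ℓ → Fin m) × (Fin ℓ → (Fin n1 ⊕ Fin n2))))
    (fun p ω => Function.Injective p.2 ∧ ∀ i, fsJoins ω (p.2 i) (p.1 i) (p.1 (fsNext i)))
  refine le_trans hub2 ?_
  have hspec : ∀ p : (Fin ℓ → Fin m) × (Fin ℓ → (Fin n1 ⊕ Fin n2)),
      fsProb n1 n2 m (fun ω => Function.Injective p.2 ∧
        ∀ i, fsJoins ω (p.2 i) (p.1 i) (p.1 (fsNext i)))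
      ≤ (4 / ((m : ℝ) - ((n1 + n2 : ℕ) : ℝ)) ^ 2) ^ ℓ := fun p =>
    fs_spec_bound hmn ℓ p.1 p.2
  calc ∑ p : (Fin ℓ → Fin m) × (Fin ℓ → (Fin n1 ⊕ Fin n2)),
        fsProb n1 n2 m (fun ω => Function.Injective p.2 ∧
          ∀ i, fsJoins ω (p.2 i) (p.1 i) (p.1 (fsNext i)))
      ≤ ∑ _p : (Fin ℓ → Fin m) × (Fin ℓ → (Fin n1 ⊕ Fin n2)),
          (4 / ((m : ℝ) - ((n1 + n2 : ℕ) : ℝ)) ^ 2) ^ ℓ :=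
        Finset.sum_le_sum fun p _ => hspec p
    _ = ((m ^ ℓ * (n1 + n2) ^ ℓ : ℕ) : ℝ) *
          (4 / ((m : ℝ) - ((n1 + n2 : ℕ) : ℝ)) ^ 2) ^ ℓ := by
        rw [Finset.sum_const, Finset.card_univ, nsmul_eq_mul]
        congr 1
        rw [Fintype.card_prod, Fintype.card_fun, Fintype.card_fun, Fintype.card_sum]
        push_cast
        simp [Fintype.card_fin]
    _ = (((n1 + n2 : ℕ) : ℝ) * (m : ℝ) * (4 / ((m : ℝ) - ((n1 + n2 : ℕ) : ℝ)) ^ 2)) ^ ℓ := by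
        push_cast
        rw [mul_pow, mul_pow]
        ring

lemma geom_tail_bound (r : ℝ) (h0 : 0 ≤ r) (h2 : r ≤ 1 / 2) (n : ℕ) :
    ∑ ℓ ∈ Finset.Icc 2 n, r ^ ℓ ≤ 8 * r ^ 2 := by
  have step : ∀ ℓ ∈ Finset.Icc 2 n, r ^ ℓ ≤ (4 * r ^ 2) * (1 / 2) ^ ℓ := by
    intro ℓ hℓ
    obtain ⟨hℓ2, -⟩ := Finset.mem_Icc.mp hℓ
    have he : r ^ ℓ = r ^ 2 * r ^ (ℓ - 2) := by
      rw [← pow_add]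
      congr 1
      omega
    have h3 : r ^ (ℓ - 2) ≤ (1 / 2 : ℝ) ^ (ℓ - 2) := pow_le_pow_left₀ h0 h2 _
    have h4 : ((1 : ℝ) / 2) ^ (ℓ - 2) = 4 * (1 / 2) ^ ℓ := by
      have hsplit : ℓ = (ℓ - 2) + 2 := by omega
      calc ((1 : ℝ) / 2) ^ (ℓ - 2) = 4 * ((1 / 2 : ℝ) ^ (ℓ - 2) * (1 / 2) ^ 2) := by ring
        _ = 4 * (1 / 2 : ℝ) ^ ((ℓ - 2) + 2) := by rw [pow_add]
        _ = 4 * (1 / 2 : ℝ) ^ ℓ := by rw [← hsplit]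
    calc r ^ ℓ = r ^ 2 * r ^ (ℓ - 2) := he
      _ ≤ r ^ 2 * (1 / 2) ^ (ℓ - 2) := mul_le_mul_of_nonneg_left h3 (sq_nonneg r)
      _ = (4 * r ^ 2) * (1 / 2) ^ ℓ := by rw [h4]; ring
  calc ∑ ℓ ∈ Finset.Icc 2 n, r ^ ℓ
      ≤ ∑ ℓ ∈ Finset.Icc 2 n, (4 * r ^ 2) * (1 / 2) ^ ℓ := Finset.sum_le_sum step
    _ = (4 * r ^ 2) * ∑ ℓ ∈ Finset.Icc 2 n, ((1 : ℝ) / 2) ^ ℓ := by rw [Finset.mul_sum]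
    _ ≤ (4 * r ^ 2) * 2 := by
        refine mul_le_mul_of_nonneg_left ?_ (by positivity)
        calc ∑ ℓ ∈ Finset.Icc 2 n, ((1 : ℝ) / 2) ^ ℓ
            ≤ ∑ ℓ ∈ Finset.range (n + 1), ((1 : ℝ) / 2) ^ ℓ := by
              refine Finset.sum_le_sum_of_subset_of_nonneg ?_ (fun ℓ _ _ => by positivity)
              intro ℓ hℓ
              rw [Finset.mem_range]
              have := (Finset.mem_Icc.mp hℓ).2
              omega
          _ ≤ 2 := sum_geometric_two_le _
    _ = 8 * r ^ 2 := by ring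

end FSAux
/-- **Lemma 3.** If `n/m(n) → 0` (with `m(n) > n`), then for any choice
of category sizes `n1(n) + n2(n) = n`, the probability that the random fs-relation
graph on parameters `(n1 n, n2 n, m n)` contains a cycle tends to `0`. -/

theorem random_fs_graph_cycle_prob_tendsto_zero
    (m : ℕ → ℕ) (hm : ∀ n : ℕ, n < m n)
    (hlim : Filter.Tendsto (fun n : ℕ => (n : ℝ) / (m n : ℝ)) Filter.atTop (nhds 0))
    (n1 n2 : ℕ → ℕ) (hpart : ∀ n : ℕ, n1 n + n2 n = n) :
    Filter.Tendsto (fun n : ℕ => fsProb (n1 n) (n2 n) (m n) fsHasCycle)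
      Filter.atTop (nhds 0) := by
  classical
  set r : ℕ → ℝ := fun n => (n : ℝ) * (m n : ℝ) * (4 / ((m n : ℝ) - (n : ℝ)) ^ 2) with hrdef
  have hmpos : ∀ n, (0:ℝ) < (m n : ℝ) := fun n => by
    have : 0 < m n := lt_of_le_of_lt (Nat.zero_le n) (hm n)
    exact_mod_cast this
  have hsub : ∀ n, (0:ℝ) < (m n : ℝ) - (n : ℝ) := fun n => by
    have : (n:ℝ) < (m n : ℝ) := by exact_mod_cast hm n
    linarith
  have hr0 : ∀ n, 0 ≤ r n := fun n => by
    simp only [hrdef]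
    exact mul_nonneg (mul_nonneg (Nat.cast_nonneg n) (Nat.cast_nonneg _))
      (div_nonneg (by norm_num) (sq_nonneg _))
  have hs : Filter.Tendsto (fun n => (m n : ℝ) / ((m n : ℝ) - n)) Filter.atTop (nhds 1) := by
    have heq : ∀ n, (m n : ℝ) / ((m n : ℝ) - n) = (1 - (n : ℝ)/(m n : ℝ))⁻¹ := by
      intro n
      have h1 := (hmpos n).ne'
      have h2 := (hsub n).ne'
      field_simp
    have hbase : Filter.Tendsto (fun n : ℕ => 1 - (n:ℝ)/(m n:ℝ)) Filter.atTop (nhds 1) := by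
      have h := (tendsto_const_nhds (x := (1:ℝ)) (f := Filter.atTop (α := ℕ))).sub hlim
      simpa using h
    have h := hbase.inv₀ (by norm_num)
    rw [inv_one] at h
    simp only [heq]
    exact h
  have hrlim : Filter.Tendsto r Filter.atTop (nhds 0) := by
    have heq : ∀ n, r n = 4 * ((n:ℝ)/(m n:ℝ)) * ((m n : ℝ)/((m n : ℝ) - n)) ^ 2 := by
      intro n
      have h1 := (hmpos n).ne'
      have h2 := (hsub n).ne'
      simp only [hrdef]
      field_simp
    have h := ((tendsto_const_nhds (x := (4:ℝ)) (f := Filter.atTop (α := ℕ))).mul hlim).mul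
      (hs.pow 2)
    have h0 : (4:ℝ) * 0 * 1 ^ 2 = 0 := by norm_num
    rw [h0] at h
    have hre : r = fun k : ℕ => 4 * ((k:ℝ)/(m k:ℝ)) * ((m k : ℝ)/((m k : ℝ) - (k:ℝ))) ^ 2 :=
      funext heq
    rw [hre]
    exact h
  have hb : ∀ n, fsProb (n1 n) (n2 n) (m n) fsHasCycle ≤ ∑ ℓ ∈ Finset.Icc 2 n, r n ^ ℓ := by
    intro n
    have hmn : n1 n + n2 n < m n := by rw [hpart n]; exact hm n
    have h := fs_cycle_bound hmn
    rw [hpart n] at h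
    simp only [hrdef]
    exact h
  have hnn : ∀ n, 0 ≤ fsProb (n1 n) (n2 n) (m n) fsHasCycle := fun n =>
    fsProb_nonneg (by rw [hpart n]; exact hm n) _
  refine squeeze_zero' (g := fun n => 8 * r n ^ 2) (Filter.Eventually.of_forall hnn) ?_ ?_
  · have hev : ∀ᶠ n in Filter.atTop, r n ≤ 1/2 :=
      hrlim.eventually (eventually_le_nhds (by norm_num))
    filter_upwards [hev] with n hn
    exact le_trans (hb n) (geom_tail_bound (r n) (hr0 n) hn n)
  · have h := (hrlim.pow 2).const_mul (8:ℝ)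
    simpa using h
end
end
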